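/- arXiv:2105.02529 — 2 statements merged into one kernel-verified Lean document; each statement's English description precedes it below -/
import Mathlib

section
/- Let G be a strongly connected directed graph that is infinite (has infinitely many vertices or a vertex with two distinct outgoing edges and infinitely many distinct cycles) and let H be any directed graph admitting a bi-infinite path y such that y[0,∞] is geodesic. If G has a vertex v with two distinct outgoing edges e₁, e₂, each starting a cycle w₁, w₂ respectively, then the tensor product graph H × G contains an eventually geodesic strictly proximal pair of bi-infinite paths. -/
namespace Paper

variable {A B C : Type*}

def shiftMap (x : ℤ → A) : ℤ → A := fun i => x (i + 1)

def shiftInvMap (x : ℤ → A) : ℤ → A := fun i => x (i - 1)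

/-- A subshift: nonempty, shift-invariant (both directions), and closed
(expressed combinatorially: any configuration all of whose central patterns
are approximated by members is a member). -/
def IsSubshift (X : Set (ℤ → A)) : Prop :=
  X.Nonempty ∧ (∀ x ∈ X, shiftMap x ∈ X) ∧ (∀ x ∈ X, shiftInvMap x ∈ X) ∧
  ∀ x : ℤ → A, (∀ n : ℕ, ∃ y ∈ X, ∀ i : ℤ, |i| ≤ (n : ℤ) → y i = x i) → x ∈ X

/-- The word `x[i, i+k-1]`. -/
def cfgWord (x : ℤ → A) (i : ℤ) (k : ℕ) : List A :=
  List.ofFn (fun t : Fin k => x (i + ((t : ℕ) : ℤ)))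

/-- The language of a set of configurations. -/
def lang (X : Set (ℤ → A)) : Set (List A) := {w | ∃ x ∈ X, ∃ i : ℤ, cfgWord x i w.length = w}

def TransitiveShift (X : Set (ℤ → A)) : Prop :=
  ∀ u ∈ lang X, ∀ v ∈ lang X, ∃ w : List A, u ++ w ++ v ∈ lang X

/-- Left ray of a configuration: `leftRay x n = x (-1-n)`. -/
def leftRay (x : ℤ → A) : ℕ → A := fun n => x (-1 - (n : ℤ))

def rightRay (x : ℤ → A) : ℕ → A := fun n => x (n : ℤ)

def LeftRays (X : Set (ℤ → A)) : Set (ℕ → A) := leftRay '' X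

def RightRays (X : Set (ℤ → A)) : Set (ℕ → A) := rightRay '' X

/-- Glue a left ray and a right ray into a configuration. -/
def glue (l r : ℕ → A) : ℤ → A := fun i => if 0 ≤ i then r i.toNat else l (-1 - i).toNat

/-- Follower set of a left-infinite sequence. -/
def foll (X : Set (ℤ → A)) (l : ℕ → A) : Set (ℕ → A) := {r | glue l r ∈ X}

def wordThen (w : List A) (r : ℕ → A) : ℕ → A :=
  fun n => if h : n < w.length then w.get ⟨n, h⟩ else r (n - w.length)

/-- Follower set of a word. -/
def follW (X : Set (ℤ → A)) (w : List A) : Set (ℕ → A) := {r | wordThen w r ∈ RightRays X}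

def occursInLeft (l : ℕ → A) (w : List A) : Prop :=
  ∃ j : ℕ, ∀ k : Fin w.length, l (j + (w.length - 1 - (k : ℕ))) = w.get k

/-- The language of a left-infinite sequence. -/
def langL (l : ℕ → A) : Set (List A) := {w | occursInLeft l w}

/-- The left ray `l` ends with the word `w`. -/
def raySuffix (l : ℕ → A) (w : List A) : Prop :=
  ∀ k : Fin w.length, l (w.length - 1 - (k : ℕ)) = w.get k

def HalfSyncWord (X : Set (ℤ → A)) (w : List A) : Prop :=
  w ∈ lang X ∧ ∃ l ∈ LeftRays X, raySuffix l w ∧ langL l = lang X ∧ foll X l = follW X w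

def HalfSynchronized (X : Set (ℤ → A)) : Prop := TransitiveShift X ∧ ∃ w, HalfSyncWord X w

def SyncWord (X : Set (ℤ → A)) (w : List A) : Prop :=
  w ∈ lang X ∧ ∀ l ∈ LeftRays X, raySuffix l w → foll X l = follW X w

def Synchronized (X : Set (ℤ → A)) : Prop := TransitiveShift X ∧ ∃ w, SyncWord X w

/-- Product of two subshifts, over the product alphabet. -/
def prodShift (Y : Set (ℤ → B)) (Z : Set (ℤ → C)) : Set (ℤ → B × C) :=
  {x | (fun i => (x i).1) ∈ Y ∧ (fun i => (x i).2) ∈ Z}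

/-- Identification of a pair of sets of right rays with a set of right rays
over the product alphabet. -/
def prodRaySet (S : Set (ℕ → B)) (T : Set (ℕ → C)) : Set (ℕ → B × C) :=
  {r | (fun n => (r n).1) ∈ S ∧ (fun n => (r n).2) ∈ T}

/-- Extend a left ray by one more symbol on the right. -/
def extendRay (l : ℕ → A) (a : A) : ℕ → A := fun n => if n = 0 then a else l (n - 1)

/-- Edge of the Krieger graph from `u` to `v` labeled `a`. -/
def KEdge (X : Set (ℤ → A)) (u : Set (ℕ → A)) (a : A) (v : Set (ℕ → A)) : Prop :=
  ∃ l ∈ LeftRays X, extendRay l a ∈ LeftRays X ∧ u = foll X l ∧ v = foll X (extendRay l a)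

def KStep (X : Set (ℤ → A)) (u v : Set (ℕ → A)) : Prop := ∃ a, KEdge X u a v

/-- Existence of a finite path in the Krieger graph. -/
def KReach (X : Set (ℤ → A)) : Set (ℕ → A) → Set (ℕ → A) → Prop :=
  Relation.ReflTransGen (KStep X)

def KVertex (X : Set (ℤ → A)) (v : Set (ℕ → A)) : Prop := ∃ l ∈ LeftRays X, v = foll X l

/-- A subshift is sofic iff it has finitely many follower sets. -/
def Sofic (X : Set (ℤ → A)) : Prop := {v : Set (ℕ → A) | KVertex X v}.Finite

/-- Vertex of the Fischer graph (w.r.t. half-synchronizing word `w`): a vertex of the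
Krieger graph in the maximal strongly connected subgraph containing `foll w`. -/
def FVertex (X : Set (ℤ → A)) (w : List A) (v : Set (ℕ → A)) : Prop :=
  KVertex X v ∧ KReach X (follW X w) v ∧ KReach X v (follW X w)

/-- Directed (multi)graph with vertex type `V` and edge type `E`. -/
structure DiGraph (V : Type*) (E : Type*) where
  ini : E → V
  ter : E → V

variable {V E V' E' : Type*}

/-- Bi-infinite path on a graph. -/
def BiPath (G : DiGraph V E) (x : ℤ → E) : Prop := ∀ i : ℤ, G.ter (x i) = G.ini (x (i + 1))

/-- `p` is a finite path of `m+1` edges. -/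
def FinPath (G : DiGraph V E) (m : ℕ) (p : Fin (m + 1) → E) : Prop :=
  ∀ k : Fin m, G.ter (p k.castSucc) = G.ini (p k.succ)

/-- The subpath `x[i, i+n]` of a bi-infinite path is a shortest path between its endpoints. -/
def GeodesicSeg (G : DiGraph V E) (x : ℤ → E) (i : ℤ) (n : ℕ) : Prop :=
  ∀ (m : ℕ) (p : Fin (m + 1) → E), FinPath G m p →
    G.ini (p 0) = G.ini (x i) → G.ter (p (Fin.last m)) = G.ter (x (i + (n : ℤ))) → n ≤ m

def EvGeodesic (G : DiGraph V E) (x : ℤ → E) : Prop :=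
  ∃ i₀ : ℤ, ∀ i : ℤ, i₀ ≤ i → ∀ n : ℕ, GeodesicSeg G x i n

/-- Strictly proximal pair of bi-infinite paths. -/
def StrictProxPair (x y : ℤ → E) : Prop :=
  (∀ n : ℕ, ∃ i : ℕ, ∀ k : ℕ, k ≤ n → x ((i : ℤ) + (k : ℤ)) = y ((i : ℤ) + (k : ℤ))) ∧
  ∀ N : ℕ, ∃ i : ℕ, N ≤ i ∧ x ((i : ℕ) : ℤ) ≠ y ((i : ℕ) : ℤ)

def HasEvGeoProxPair (G : DiGraph V E) : Prop :=
  ∃ x y : ℤ → E, BiPath G x ∧ BiPath G y ∧ EvGeodesic G x ∧ EvGeodesic G y ∧ StrictProxPair x y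

/-- Edges of the Fischer graph: Krieger edges between Fischer vertices. -/
def FischerE (X : Set (ℤ → A)) (w : List A) : Type _ :=
  {t : Set (ℕ → A) × A × Set (ℕ → A) //
    FVertex X w t.1 ∧ FVertex X w t.2.2 ∧ KEdge X t.1 t.2.1 t.2.2}

def FischerGraph (X : Set (ℤ → A)) (w : List A) : DiGraph (Set (ℕ → A)) (FischerE X w) :=
  ⟨fun e => e.1.1, fun e => e.1.2.2⟩

def SlidingBlockCode (X : Set (ℤ → A)) (F : (ℤ → A) → (ℤ → B)) : Prop :=
  ∃ (r : ℕ) (f : (Fin (2 * r + 1) → A) → B),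
    ∀ x ∈ X, ∀ i : ℤ, F x i = f (fun k => x (i + ((k : ℕ) : ℤ) - (r : ℤ)))

def ShiftConjugate (X : Set (ℤ → A)) (Y : Set (ℤ → B)) : Prop :=
  ∃ F : (ℤ → A) → (ℤ → B), SlidingBlockCode X F ∧ Set.InjOn F X ∧ F '' X = Y

def DirectPrime (X : Set (ℤ → A)) : Prop :=
  ∀ (B C : Type) (_ : Finite B) (_ : Finite C) (Y : Set (ℤ → B)) (Z : Set (ℤ → C)),
    IsSubshift Y → IsSubshift Z → ShiftConjugate X (prodShift Y Z) →
    (∃ y, Y = {y}) ∨ (∃ z, Z = {z})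

/-- Tensor product of directed graphs. -/
def tensorG {VH EH VG EG : Type*} (H : DiGraph VH EH) (G : DiGraph VG EG) :
    DiGraph (VH × VG) (EH × EG) :=
  ⟨fun e => (H.ini e.1, G.ini e.2), fun e => (H.ter e.1, G.ter e.2)⟩

/-- Clamped concatenation of two finite edge sequences. -/
def cat2 {n₁ n₂ : ℕ} (w₁ : Fin (n₁+1) → E) (w₂ : Fin (n₂+1) → E) : ℕ → E :=
  fun k => if h : k ≤ n₁ then w₁ ⟨k, by omega⟩ else w₂ ⟨min (k - (n₁+1)) n₂, by omega⟩

lemma cat2_zero {n₁ n₂ : ℕ} (w₁ : Fin (n₁+1) → E) (w₂ : Fin (n₂+1) → E) :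
    cat2 w₁ w₂ 0 = w₁ 0 := by
  simp [cat2]

lemma cat2_last {n₁ n₂ : ℕ} (w₁ : Fin (n₁+1) → E) (w₂ : Fin (n₂+1) → E) :
    cat2 w₁ w₂ (n₁+n₂+1) = w₂ (Fin.last n₂) := by
  have h : ¬ (n₁+n₂+1 ≤ n₁) := by omega
  rw [cat2, dif_neg h]
  exact congrArg w₂ (Fin.ext (by simp only [Fin.val_last]; omega))

lemma cat2_path {G : DiGraph V E} {n₁ n₂ : ℕ} {w₁ : Fin (n₁+1) → E} {w₂ : Fin (n₂+1) → E}
    (hw₁ : FinPath G n₁ w₁) (hw₂ : FinPath G n₂ w₂)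
    (hglue : G.ter (w₁ (Fin.last n₁)) = G.ini (w₂ 0)) :
    ∀ k : ℕ, k + 1 ≤ n₁ + n₂ + 1 → G.ter (cat2 w₁ w₂ k) = G.ini (cat2 w₁ w₂ (k+1)) := by
  intro k hk
  rcases lt_trichotomy k n₁ with h | h | h
  · rw [cat2, dif_pos (by omega : k ≤ n₁), cat2, dif_pos (by omega : k+1 ≤ n₁)]
    exact hw₁ ⟨k, h⟩
  · subst h
    rw [cat2, dif_pos (le_refl k), cat2, dif_neg (by omega : ¬ (k+1 ≤ k))]
    have h1 : (⟨k, by omega⟩ : Fin (k+1)) = Fin.last k := rfl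
    rw [h1, hglue]
    exact congrArg (fun t => G.ini (w₂ t)) (Fin.ext (by simp only [Fin.val_zero]; omega))
  · rw [cat2, dif_neg (by omega : ¬ (k ≤ n₁)), cat2, dif_neg (by omega : ¬ (k+1 ≤ n₁))]
    have this' : G.ter (w₂ ⟨k - (n₁+1), by omega⟩) = G.ini (w₂ ⟨k - (n₁+1) + 1, by omega⟩) :=
      hw₂ ⟨k - (n₁+1), by omega⟩
    have e1 : w₂ (⟨min (k - (n₁+1)) n₂, by omega⟩ : Fin (n₂+1)) = w₂ ⟨k - (n₁+1), by omega⟩ :=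
      congrArg w₂ (Fin.ext (by show min (k - (n₁+1)) n₂ = k - (n₁+1); omega))
    have e2 : w₂ (⟨min (k + 1 - (n₁+1)) n₂, by omega⟩ : Fin (n₂+1)) = w₂ ⟨k - (n₁+1) + 1, by omega⟩ :=
      congrArg w₂ (Fin.ext (by show min (k + 1 - (n₁+1)) n₂ = k - (n₁+1) + 1; omega))
    rw [e1, e2]
    exact this'

lemma blockBiPath {G : DiGraph V E} (L : ℕ) (hL : 0 < L) (c : ℤ → ℕ → E)
    (h1 : ∀ (q : ℤ) (k : ℕ), k + 1 < L → G.ter (c q k) = G.ini (c q (k+1)))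
    (h2 : ∀ q : ℤ, G.ter (c q (L-1)) = G.ini (c (q+1) 0)) :
    BiPath G (fun i => c (i / (L:ℤ)) ((i % (L:ℤ)).toNat)) := by
  intro i
  have hL' : (0:ℤ) < L := by exact_mod_cast hL
  have hr0 : 0 ≤ i % L := Int.emod_nonneg i (by omega)
  have hrL : i % L < L := Int.emod_lt_of_pos i hL'
  have hdm : (L:ℤ) * (i / L) + i % L = i := Int.mul_ediv_add_emod i L
  by_cases h : i % L + 1 < L
  · have hi1 : i + 1 = (i % L + 1) + (i / L) * L := by linarith [hdm]
    have ed : (i+1) / L = i / L := by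
      rw [hi1, Int.add_mul_ediv_right _ _ (by omega : (L:ℤ) ≠ 0),
        Int.ediv_eq_zero_of_lt (by omega) h, zero_add]
    have em : (i+1) % L = i % L + 1 := by
      rw [hi1, Int.add_mul_emod_self_right, Int.emod_eq_of_lt (by omega) h]
    show G.ter (c (i / L) (i % (L:ℤ)).toNat) = G.ini (c ((i+1) / L) ((i+1) % (L:ℤ)).toNat)
    rw [ed, em]
    have : (i % (L:ℤ) + 1).toNat = (i % (L:ℤ)).toNat + 1 := by omega
    rw [this]
    exact h1 _ _ (by omega)
  · have hr : i % L = (L:ℤ) - 1 := by omega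
    have hi1 : i + 1 = 0 + (i / L + 1) * L := by linarith [hdm]
    have ed : (i+1) / L = i / L + 1 := by
      rw [hi1, Int.add_mul_ediv_right _ _ (by omega : (L:ℤ) ≠ 0),
        Int.ediv_eq_zero_of_lt le_rfl hL', zero_add]
    have em : (i+1) % L = 0 := by
      rw [hi1, Int.add_mul_emod_self_right, Int.emod_eq_of_lt le_rfl hL']
    show G.ter (c (i / L) (i % (L:ℤ)).toNat) = G.ini (c ((i+1) / L) ((i+1) % (L:ℤ)).toNat)
    rw [ed, em]
    have : (i % (L:ℤ)).toNat = L - 1 := by omega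
    rw [this]
    exact h2 _

open Classical in
/-- Block choice: use `u₂` on square block indices, else `u₁`. -/
noncomputable def blkFun {E : Type*} (u₁ u₂ : ℕ → E) : ℤ → ℕ → E :=
  fun q k => if ∃ m : ℕ, q = ((m*m : ℕ) : ℤ) then u₂ k else u₁ k

lemma blkFun_pos {E : Type*} (u₁ u₂ : ℕ → E) (q : ℤ) (h : ∃ m : ℕ, q = ((m*m : ℕ) : ℤ)) (k : ℕ) :
    blkFun u₁ u₂ q k = u₂ k := by simp only [blkFun, if_pos h]

lemma blkFun_neg {E : Type*} (u₁ u₂ : ℕ → E) (q : ℤ) (h : ¬ ∃ m : ℕ, q = ((m*m : ℕ) : ℤ)) (k : ℕ) :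
    blkFun u₁ u₂ q k = u₁ k := by simp only [blkFun, if_neg h]

/-- Bi-infinite path built from blocks of length `L`. -/
def zOf {E : Type*} (L : ℕ) (c : ℤ → ℕ → E) : ℤ → E :=
  fun i => c (i / (L:ℤ)) ((i % (L:ℤ)).toNat)

lemma zOf_eq {E : Type*} (L : ℕ) (c : ℤ → ℕ → E) (j q' : ℤ) (r' : ℕ)
    (hd : j / (L:ℤ) = q') (hm : j % (L:ℤ) = (r' : ℤ)) : zOf L c j = c q' r' := by
  unfold zOf
  rw [hd, hm]
  simp

lemma not_sq_between {m b : ℕ} (h1 : m*m < b) (h2 : b ≤ m*m + m) :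
    ¬ ∃ r : ℕ, ((b : ℕ) : ℤ) = ((r*r : ℕ) : ℤ) := by
  rintro ⟨r, hr⟩
  have hr' : b = r * r := by exact_mod_cast hr
  have h3 : m + 1 ≤ r := by
    by_contra h
    push_neg at h
    have := Nat.mul_le_mul (by omega : r ≤ m) (by omega : r ≤ m)
    omega
  have h4 := Nat.mul_le_mul h3 h3
  have hexp : (m+1) * (m+1) = m*m + 2*m + 1 := by ring
  omega

lemma zOf_biPath {V E : Type*} {G : DiGraph V E} (L : ℕ) (hL : 0 < L) (c : ℤ → ℕ → E)
    (h1 : ∀ (q : ℤ) (k : ℕ), k + 1 < L → G.ter (c q k) = G.ini (c q (k+1)))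
    (h2 : ∀ q : ℤ, G.ter (c q (L-1)) = G.ini (c (q+1) 0)) :
    BiPath G (zOf L c) := blockBiPath L hL c h1 h2

theorem stmt9 {VH EH VG EG : Type*} (H : DiGraph VH EH) (G : DiGraph VG EG)
    (hsc : ∀ u v : VG,
      Relation.ReflTransGen (fun a b => ∃ e : EG, G.ini e = a ∧ G.ter e = b) u v)
    (y : ℤ → EH) (hy : BiPath H y)
    (hygeo : ∀ i : ℤ, 0 ≤ i → ∀ n : ℕ, GeodesicSeg H y i n)
    (v : VG) (e₁ e₂ : EG) (hne : e₁ ≠ e₂) (he₁ : G.ini e₁ = v) (he₂ : G.ini e₂ = v)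
    (n₁ n₂ : ℕ) (w₁ : Fin (n₁ + 1) → EG) (w₂ : Fin (n₂ + 1) → EG)
    (hw₁ : FinPath G n₁ w₁) (hw₂ : FinPath G n₂ w₂)
    (hw₁0 : w₁ 0 = e₁) (hw₂0 : w₂ 0 = e₂)
    (hc₁ : G.ter (w₁ (Fin.last n₁)) = v) (hc₂ : G.ter (w₂ (Fin.last n₂)) = v) :
    HasEvGeoProxPair (tensorG H G) := by
  classical
  set L : ℕ := n₁ + n₂ + 2 with hLdef
  have hL : 0 < L := by omega
  set u₁ : ℕ → EG := cat2 w₁ w₂ with hu₁def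
  set u₂ : ℕ → EG := cat2 w₂ w₁ with hu₂def
  have hu₁0 : u₁ 0 = e₁ := by rw [hu₁def, cat2_zero, hw₁0]
  have hu₂0 : u₂ 0 = e₂ := by rw [hu₂def, cat2_zero, hw₂0]
  have hiu₁ : G.ini (u₁ 0) = v := by rw [hu₁0, he₁]
  have hiu₂ : G.ini (u₂ 0) = v := by rw [hu₂0, he₂]
  have htu₁ : G.ter (u₁ (L-1)) = v := by
    have hL1 : L - 1 = n₁ + n₂ + 1 := by omega
    rw [hL1, hu₁def, cat2_last, hc₂]
  have htu₂ : G.ter (u₂ (L-1)) = v := by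
    have hL1 : L - 1 = n₂ + n₁ + 1 := by omega
    rw [hL1, hu₂def, cat2_last, hc₁]
  have hp₁ : ∀ k, k + 1 < L → G.ter (u₁ k) = G.ini (u₁ (k+1)) := fun k hk =>
    cat2_path hw₁ hw₂ (by rw [hc₁, hw₂0, he₂]) k (by omega)
  have hp₂ : ∀ k, k + 1 < L → G.ter (u₂ k) = G.ini (u₂ (k+1)) := fun k hk =>
    cat2_path hw₂ hw₁ (by rw [hc₂, hw₁0, he₁]) k (by omega)
  set c₁ : ℤ → ℕ → EG := fun _ k => u₁ k with hc₁def
  set c₂ : ℤ → ℕ → EG := blkFun u₁ u₂ with hc₂def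
  set z₁ : ℤ → EG := zOf L c₁ with hz₁def
  set z₂ : ℤ → EG := zOf L c₂ with hz₂def
  have hbz₁ : BiPath G z₁ :=
    zOf_biPath L hL c₁ (fun q k hk => hp₁ k hk) (fun q => by
      show G.ter (u₁ (L-1)) = G.ini (u₁ 0); rw [htu₁, hiu₁])
  have hbz₂ : BiPath G z₂ := by
    refine zOf_biPath L hL c₂ (fun q k hk => ?_) (fun q => ?_)
    · by_cases h : ∃ m : ℕ, q = ((m*m : ℕ) : ℤ)
      · rw [hc₂def, blkFun_pos u₁ u₂ q h, blkFun_pos u₁ u₂ q h]; exact hp₂ k hk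
      · rw [hc₂def, blkFun_neg u₁ u₂ q h, blkFun_neg u₁ u₂ q h]; exact hp₁ k hk
    · have hterm : G.ter (c₂ q (L-1)) = v := by
        by_cases h : ∃ m : ℕ, q = ((m*m : ℕ) : ℤ)
        · rw [hc₂def, blkFun_pos u₁ u₂ q h]; exact htu₂
        · rw [hc₂def, blkFun_neg u₁ u₂ q h]; exact htu₁
      have hinit : G.ini (c₂ (q+1) 0) = v := by
        by_cases h : ∃ m : ℕ, q + 1 = ((m*m : ℕ) : ℤ)
        · rw [hc₂def, blkFun_pos u₁ u₂ _ h]; exact hiu₂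
        · rw [hc₂def, blkFun_neg u₁ u₂ _ h]; exact hiu₁
      rw [hterm, hinit]
  refine ⟨fun i => (y i, z₁ i), fun i => (y i, z₂ i), ?_, ?_, ?_, ?_, ?_, ?_⟩
  · intro i
    show (H.ter (y i), G.ter (z₁ i)) = (H.ini (y (i+1)), G.ini (z₁ (i+1)))
    rw [hy i, hbz₁ i]
  · intro i
    show (H.ter (y i), G.ter (z₂ i)) = (H.ini (y (i+1)), G.ini (z₂ (i+1)))
    rw [hy i, hbz₂ i]
  · refine ⟨0, fun i hi n m p hp h0 hlast => ?_⟩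
    exact hygeo i hi n m (fun k => (p k).1) (fun k => congrArg Prod.fst (hp k))
      (congrArg Prod.fst h0) (congrArg Prod.fst hlast)
  · refine ⟨0, fun i hi n m p hp h0 hlast => ?_⟩
    exact hygeo i hi n m (fun k => (p k).1) (fun k => congrArg Prod.fst (hp k))
      (congrArg Prod.fst h0) (congrArg Prod.fst hlast)
  · intro n
    have hB : ∃ B : ℕ, B = (n+1) * (n+1) + 1 := ⟨_, rfl⟩
    obtain ⟨B, hBdef⟩ := hB
    refine ⟨B * L, fun k hk => ?_⟩
    show (y _, z₁ _) = (y _, z₂ _)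
    have hj : ((B*L : ℕ) : ℤ) + (k : ℤ) = ((B*L + k : ℕ) : ℤ) := by push_cast; ring
    rw [hj]
    have hndiv : (B*L + k) / L = B + k / L := by
      rw [mul_comm B L, Nat.mul_add_div hL]
    have hnmod : (B*L + k) % L = k % L := by
      rw [mul_comm B L, Nat.mul_add_mod]
    have hdiv : ((B*L + k : ℕ) : ℤ) / (L:ℤ) = ((B + k / L : ℕ) : ℤ) := by
      rw [← Int.natCast_ediv, hndiv]
    have hmod : ((B*L + k : ℕ) : ℤ) % (L:ℤ) = ((k % L : ℕ) : ℤ) := by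
      rw [← Int.natCast_emod, hnmod]
    have hkL : k / L ≤ n := le_trans (Nat.div_le_self k L) hk
    have hnsq : ¬ ∃ r : ℕ, ((B + k / L : ℕ) : ℤ) = ((r*r : ℕ) : ℤ) := by
      refine not_sq_between (m := n+1) ?_ ?_
      · rw [hBdef]; exact Nat.lt_add_right _ (Nat.lt_succ_self _)
      · rw [hBdef]; omega
    have hzz : z₂ ((B*L + k : ℕ) : ℤ) = z₁ ((B*L + k : ℕ) : ℤ) := by
      rw [hz₂def, zOf_eq L c₂ _ _ _ hdiv hmod, hz₁def, zOf_eq L c₁ _ _ _ hdiv hmod,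
        hc₂def, blkFun_neg u₁ u₂ _ hnsq]
    rw [hzz]
  · intro N
    refine ⟨N*N*L, ?_, ?_⟩
    · calc N = N * 1 * 1 := by ring
        _ ≤ N * N * L := by
          rcases Nat.eq_zero_or_pos N with h | h
          · simp [h]
          · exact Nat.mul_le_mul (Nat.mul_le_mul_left N h) hL
    · have hdiv : ((N*N*L : ℕ) : ℤ) / (L:ℤ) = ((N*N : ℕ) : ℤ) := by
        rw [← Int.natCast_ediv, Nat.mul_div_cancel _ hL]
      have hmod : ((N*N*L : ℕ) : ℤ) % (L:ℤ) = ((0 : ℕ) : ℤ) := by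
        rw [← Int.natCast_emod, Nat.mul_mod_left]
      intro hEq
      apply hne
      have h2 : z₁ ((N*N*L : ℕ) : ℤ) = z₂ ((N*N*L : ℕ) : ℤ) := congrArg Prod.snd hEq
      have hzz1 : z₁ ((N*N*L : ℕ) : ℤ) = e₁ := by
        rw [hz₁def, zOf_eq L c₁ _ _ _ hdiv hmod]
        exact hu₁0
      have hzz2 : z₂ ((N*N*L : ℕ) : ℤ) = e₂ := by
        rw [hz₂def, zOf_eq L c₂ _ _ _ hdiv hmod, hc₂def,
          blkFun_pos u₁ u₂ _ ⟨N, rfl⟩]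
        exact hu₂0
      rw [← hzz1, ← hzz2, h2]

end Paper
end

section
/- The Fischer graph of the n-Dyck shift D_n (n > 1) does not contain an eventually geodesic strictly proximal pair of bi-infinite paths. -/
namespace Paper

variable {A B C : Type*}

variable {V E V' E' : Type*}

/-- Words over the bracket alphabet that reduce to the identity of the Dyck monoid. -/
inductive ReducesToOne {n : ℕ} : List (Fin n ⊕ Fin n) → Prop
  | nil : ReducesToOne []
  | wrap (i : Fin n) (w : List (Fin n ⊕ Fin n)) :
      ReducesToOne w → ReducesToOne (Sum.inl i :: (w ++ [Sum.inr i]))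
  | append (u v : List (Fin n ⊕ Fin n)) :
      ReducesToOne u → ReducesToOne v → ReducesToOne (u ++ v)

/-- A word is zero in the Dyck monoid iff it contains a mismatched pair of brackets. -/
def Mismatch {n : ℕ} (w : List (Fin n ⊕ Fin n)) : Prop :=
  ∃ (u m v : List (Fin n ⊕ Fin n)) (i j : Fin n), i ≠ j ∧ ReducesToOne m ∧
    w = u ++ Sum.inl i :: (m ++ Sum.inr j :: v)

/-- The `n`-Dyck shift: left brackets `Sum.inl i`, right brackets `Sum.inr i`. -/
def Dyck (n : ℕ) : Set (ℤ → Fin n ⊕ Fin n) :=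
  {x | ∀ (i : ℤ) (k : ℕ), ¬ Mismatch (cfgWord x i k)}

/-! ### Auxiliary machinery -/

section Machine

variable {n : ℕ}

/-- One step of the (forgiving) Dyck stack machine. -/
def dstep (s : List (Fin n)) : (Fin n ⊕ Fin n) → Option (List (Fin n))
  | .inl i => some (i :: s)
  | .inr i => match s with
    | [] => some []
    | j :: s' => if i = j then some s' else none

/-- Run of the forgiving Dyck stack machine. -/
def runW (s : List (Fin n)) : List (Fin n ⊕ Fin n) → Option (List (Fin n))
  | [] => some s
  | a :: w => match dstep s a with
    | none => none
    | some s' => runW s' w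

lemma runW_append (s : List (Fin n)) (u v : List (Fin n ⊕ Fin n)) :
    runW s (u ++ v) = (runW s u).bind (fun s' => runW s' v) := by
  induction u generalizing s with
  | nil => simp [runW]
  | cons a u ih =>
      simp only [List.cons_append, runW]
      cases h : dstep s a with
      | none => simp
      | some s' => simp [ih]

lemma runW_concat (s : List (Fin n)) (u : List (Fin n ⊕ Fin n)) (a : Fin n ⊕ Fin n) :
    runW s (u ++ [a]) = (runW s u).bind (fun s' => dstep s' a) := by
  rw [runW_append]
  congr 1
  funext s'
  cases h : dstep s' a <;> simp [runW, h]

lemma reducesToOne_runW {w : List (Fin n ⊕ Fin n)} (h : ReducesToOne w) :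
    ∀ s, runW s w = some s := by
  induction h with
  | nil => intro s; rfl
  | wrap i w _ ih =>
      intro s
      show runW s (.inl i :: (w ++ [.inr i])) = some s
      have : dstep s (Sum.inl i : Fin n ⊕ Fin n) = some (i :: s) := rfl
      simp only [runW, this]
      rw [runW_concat, ih (i :: s)]
      simp [dstep]
  | append u v _ _ ihu ihv =>
      intro s
      rw [runW_append, ihu s]
      simpa using ihv s

/-- Bottom-extension lemma: running with extra stack at the bottom. -/
lemma runW_bottom (w : List (Fin n ⊕ Fin n)) :
    ∀ (σ b : List (Fin n)), runW (σ ++ b) w = none ∨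
      ∃ σ₂ b', b' <:+ b ∧ runW (σ ++ b) w = some (σ₂ ++ b') ∧ runW σ w = some σ₂ := by
  induction w with
  | nil =>
      intro σ b
      exact Or.inr ⟨σ, b, List.suffix_refl b, rfl, rfl⟩
  | cons a w ih =>
      intro σ b
      match a with
      | .inl i =>
          have h1 : runW (σ ++ b) (.inl i :: w) = runW ((i :: σ) ++ b) w := rfl
          have h2 : runW σ (.inl i :: w) = runW (i :: σ) w := rfl
          rw [h1, h2]
          exact ih (i :: σ) b
      | .inr i =>
          match σ with
          | j :: σ' =>
              by_cases hij : i = j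
              · subst hij
                have h1 : runW ((i :: σ') ++ b) (.inr i :: w) = runW (σ' ++ b) w := by
                  simp [runW, dstep]
                have h2 : runW (i :: σ') (.inr i :: w) = runW σ' w := by
                  simp [runW, dstep]
                rw [h1, h2]
                exact ih σ' b
              · left
                simp [runW, dstep, hij]
          | [] =>
              match b with
              | [] =>
                  have h1 : runW (([] : List (Fin n)) ++ []) (.inr i :: w) = runW [] w := by
                    simp [runW, dstep]
                  have h2 : runW ([] : List (Fin n)) (.inr i :: w) = runW [] w := by
                    simp [runW, dstep]
                  rw [h1, h2]
                  simpa using ih [] []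
              | k :: b'' =>
                  by_cases hik : i = k
                  · subst hik
                    have h1 : runW (([] : List (Fin n)) ++ (i :: b'')) (.inr i :: w)
                        = runW ([] ++ b'') w := by simp [runW, dstep]
                    have h2 : runW ([] : List (Fin n)) (.inr i :: w) = runW [] w := by
                      simp [runW, dstep]
                    rw [h1, h2]
                    rcases ih [] b'' with h | ⟨σ₂, b', hb', hrun, hrun0⟩
                    · exact Or.inl h
                    · exact Or.inr ⟨σ₂, b', hb'.trans (List.suffix_cons i b''), hrun, hrun0⟩
                  · left
                    simp [runW, dstep, hik]

lemma runW_mono_none {σ b : List (Fin n)} {w : List (Fin n ⊕ Fin n)}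
    (h : runW σ w = none) : runW (σ ++ b) w = none := by
  rcases runW_bottom w σ b with h' | ⟨σ₂, b', _, _, hrun0⟩
  · exact h'
  · rw [h] at hrun0; cases hrun0

lemma runW_mono_ne_none {σ b : List (Fin n)} {w : List (Fin n ⊕ Fin n)}
    (h : runW (σ ++ b) w ≠ none) : runW σ w ≠ none := by
  intro h0; exact h (runW_mono_none h0)

end Machine


section Machine2

variable {n : ℕ}

/-- Peeling the top of the stack after a successful run. -/
lemma runW_key : ∀ (N : ℕ) (w : List (Fin n ⊕ Fin n)) (p : Fin n) (s : List (Fin n)),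
    w.length ≤ N → runW [] w = some (p :: s) →
    ∃ u m, w = u ++ .inl p :: m ∧ ReducesToOne m ∧ runW [] u = some s := by
  intro N
  induction N with
  | zero =>
      intro w p s hw hrun
      interval_cases h : w.length
      · rw [List.length_eq_zero_iff] at h; subst h; cases hrun
  | succ N ih =>
      intro w p s hw hrun
      rcases List.eq_nil_or_concat w with rfl | ⟨w', a, rfl⟩
      · cases hrun
      · rw [List.concat_eq_append] at hrun hw ⊢
        rw [runW_concat] at hrun
        cases hw' : runW [] w' with
        | none => rw [hw'] at hrun; cases hrun
        | some s₁ =>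
            rw [hw'] at hrun
            simp only [Option.bind_some] at hrun
            have hlen : w'.length ≤ N := by
              have := hw; simp at this; omega
            match a with
            | .inl i =>
                have : i :: s₁ = p :: s := by
                  simpa [dstep] using hrun
                obtain ⟨rfl, rfl⟩ : i = p ∧ s₁ = s := by
                  constructor <;> [exact (List.cons.injEq .. ▸ this).1;
                    exact (List.cons.injEq .. ▸ this).2]
                exact ⟨w', [], by simp, ReducesToOne.nil, hw'⟩
            | .inr i =>
                match s₁, hrun with
                | [], hrun =>
                    have : ([] : List (Fin n)) = p :: s := by simpa [dstep] using hrun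
                    cases this
                | (j :: s₁'), hrun =>
                    have hij : i = j := by
                      by_contra hne
                      simp [dstep, hne] at hrun
                    subst hij
                    have hs₁ : s₁' = p :: s := by simpa [dstep] using hrun
                    subst hs₁
                    obtain ⟨u'', m', hw'eq, hm', hu''⟩ := ih w' i (p :: s) hlen hw'
                    have hu''len : u''.length ≤ N := by
                      have : u''.length ≤ w'.length := by
                        rw [hw'eq]; simp
                      omega
                    obtain ⟨u₃, m₃, hu''eq, hm₃, hu₃⟩ := ih u'' p s hu''len hu''
                    refine ⟨u₃, m₃ ++ (.inl i :: (m' ++ [.inr i])), ?_, ?_, hu₃⟩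
                    · rw [hw'eq, hu''eq]; simp
                    · exact ReducesToOne.append _ _ hm₃ (ReducesToOne.wrap i m' hm')

lemma runW_none_split : ∀ (N : ℕ) (w : List (Fin n ⊕ Fin n)),
    w.length ≤ N → runW [] w = none →
    ∃ w₁ q w₂ p s, w = w₁ ++ .inr q :: w₂ ∧ runW [] w₁ = some (p :: s) ∧ p ≠ q := by
  intro N
  induction N with
  | zero =>
      intro w hw hrun
      interval_cases h : w.length
      · rw [List.length_eq_zero_iff] at h; subst h; cases hrun
  | succ N ih =>
      intro w hw hrun
      rcases List.eq_nil_or_concat w with rfl | ⟨w', a, rfl⟩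
      · cases hrun
      · rw [List.concat_eq_append] at hrun hw ⊢
        have hlen : w'.length ≤ N := by
          have := hw; simp at this; omega
        rw [runW_concat] at hrun
        cases hw' : runW [] w' with
        | none =>
            obtain ⟨w₁, q, w₂, p, s, heq, hr, hne⟩ := ih w' hlen hw'
            exact ⟨w₁, q, w₂ ++ [a], p, s, by rw [heq]; simp, hr, hne⟩
        | some s₁ =>
            rw [hw'] at hrun
            simp only [Option.bind_some] at hrun
            match a with
            | .inl i => simp [dstep] at hrun
            | .inr i =>
                match s₁ with
                | [] => simp [dstep] at hrun
                | j :: s₁' =>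
                    have hij : i ≠ j := by
                      intro h; subst h; simp [dstep] at hrun
                    exact ⟨w', i, [], j, s₁', by simp, hw', fun h => hij h.symm⟩

/-- Characterization of mismatch by the forgiving stack machine. -/
lemma mismatch_iff_runW (w : List (Fin n ⊕ Fin n)) :
    Mismatch w ↔ runW [] w = none := by
  constructor
  · rintro ⟨u, m, v, i, j, hij, hm, rfl⟩
    rw [runW_append]
    cases hu : runW [] u with
    | none => rfl
    | some s =>
        simp only [Option.bind_some]
        have h1 : runW s (.inl i :: (m ++ .inr j :: v)) =
            runW (i :: s) (m ++ .inr j :: v) := rfl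
        rw [h1, runW_append, reducesToOne_runW hm (i :: s)]
        simp only [Option.bind_some]
        have hd : dstep (i :: s) (Sum.inr j : Fin n ⊕ Fin n) = none := by
          simp only [dstep, ite_eq_right_iff]
          exact fun h => absurd h.symm hij
        simp [runW, hd]
  · intro hrun
    obtain ⟨w₁, q, w₂, p, s, heq, hr, hne⟩ := runW_none_split w.length w le_rfl hrun
    obtain ⟨u, m, hw₁, hm, _⟩ := runW_key w₁.length w₁ p s le_rfl hr
    exact ⟨u, m, w₂, p, q, hne, hm, by rw [heq, hw₁]; simp⟩

end Machine2

section Words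

variable {A : Type*}

/-- The last `Q` symbols of a left ray, read left to right. -/
def lword (l : ℕ → A) (Q : ℕ) : List A := List.ofFn (fun t : Fin Q => l (Q - 1 - (t : ℕ)))

/-- The segment `r[i, i+k-1]` of a right ray. -/
def rword (r : ℕ → A) (i k : ℕ) : List A := List.ofFn (fun t : Fin k => r (i + (t : ℕ)))

/-- Prepend a symbol to a right ray. -/
def consRay (a : A) (r : ℕ → A) : ℕ → A := fun k => if k = 0 then a else r (k - 1)

lemma ofFn_congr' {k : ℕ} {f g : Fin k → A} (h : ∀ t, f t = g t) :
    List.ofFn f = List.ofFn g := by rw [funext h]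

lemma cfgWord_congr {x y : ℤ → A} {i j : ℤ} {k : ℕ}
    (h : ∀ t : ℕ, t < k → x (i + t) = y (j + t)) : cfgWord x i k = cfgWord y j k :=
  ofFn_congr' fun t => h t t.2

lemma cfgWord_add (x : ℤ → A) (i : ℤ) (k₁ k₂ : ℕ) :
    cfgWord x i (k₁ + k₂) = cfgWord x i k₁ ++ cfgWord x (i + k₁) k₂ := by
  unfold cfgWord
  rw [List.ofFn_add]
  congr 1 <;>
    exact ofFn_congr' fun t =>
      congrArg x (by push_cast [Fin.coe_castAdd, Fin.coe_natAdd]; ring)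

lemma cfgWord_shiftMap (x : ℤ → A) (i : ℤ) (k : ℕ) :
    cfgWord (shiftMap x) i k = cfgWord x (i + 1) k :=
  cfgWord_congr fun t _ => by
    show x (i + (t : ℤ) + 1) = x (i + 1 + (t : ℤ))
    congr 1
    ring

lemma cfgWord_shiftInvMap (x : ℤ → A) (i : ℤ) (k : ℕ) :
    cfgWord (shiftInvMap x) i k = cfgWord x (i - 1) k :=
  cfgWord_congr fun t _ => by
    show x (i + (t : ℤ) - 1) = x (i - 1 + (t : ℤ))
    congr 1
    ring

lemma glue_nonneg (l r : ℕ → A) {i : ℤ} (h : 0 ≤ i) : glue l r i = r i.toNat := if_pos h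

lemma glue_neg (l r : ℕ → A) {i : ℤ} (h : i < 0) : glue l r i = l (-1 - i).toNat :=
  if_neg (not_le.mpr h)

lemma glue_leftRay_rightRay (x : ℤ → A) : glue (leftRay x) (rightRay x) = x := by
  funext i
  by_cases h : 0 ≤ i
  · rw [glue_nonneg _ _ h]
    show x ((i.toNat : ℤ)) = x i
    rw [Int.toNat_of_nonneg h]
  · rw [glue_neg _ _ (not_le.mp h)]
    show x (-1 - (((-1 - i).toNat : ℕ) : ℤ)) = x i
    rw [Int.toNat_of_nonneg (by omega)]
    congr 1
    ring

lemma leftRay_glue (l r : ℕ → A) : leftRay (glue l r) = l := by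
  funext m
  show glue l r (-1 - (m : ℤ)) = l m
  rw [glue_neg _ _ (by omega)]
  congr 1
  omega

lemma rightRay_glue (l r : ℕ → A) : rightRay (glue l r) = r := by
  funext m
  show glue l r (m : ℤ) = r m
  rw [glue_nonneg _ _ (by omega)]
  congr 1

lemma cfgWord_glue_right (l r : ℕ → A) {i : ℤ} (h : 0 ≤ i) (k : ℕ) :
    cfgWord (glue l r) i k = rword r i.toNat k := by
  unfold cfgWord rword
  refine ofFn_congr' fun t => ?_
  rw [glue_nonneg _ _ (by omega)]
  congr 1
  omega

lemma cfgWord_glue_left {l : ℕ → A} {x₀ : ℤ → A} (hl : l = leftRay x₀) (r : ℕ → A)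
    {i : ℤ} {k : ℕ} (h : i + k ≤ 0) :
    cfgWord (glue l r) i k = cfgWord x₀ i k :=
  cfgWord_congr fun t ht => by
    rw [glue_neg _ _ (by omega), hl]
    show x₀ (-1 - (((-1 - (i + t)).toNat : ℕ) : ℤ)) = _
    rw [Int.toNat_of_nonneg (by omega)]
    congr 1
    ring

lemma lword_leftRay (x : ℤ → A) (Q : ℕ) : lword (leftRay x) Q = cfgWord x (-(Q : ℤ)) Q := by
  unfold lword cfgWord
  refine ofFn_congr' fun t => ?_
  show x (-1 - ((Q - 1 - (t : ℕ) : ℕ) : ℤ)) = x (-(Q : ℤ) + (t : ℕ))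
  congr 1
  have := t.2
  omega

lemma rword_rightRay (x : ℤ → A) (i k : ℕ) : rword (rightRay x) i k = cfgWord x (i : ℤ) k := by
  unfold rword cfgWord
  refine ofFn_congr' fun t => ?_
  show x (((i + (t : ℕ) : ℕ) : ℤ)) = x ((i : ℤ) + (t : ℕ))
  congr 1

lemma cfgWord_glue_span (l r : ℕ → A) {i : ℤ} {k : ℕ} (h1 : i < 0) (h2 : 0 < i + k) :
    cfgWord (glue l r) i k = lword l (-i).toNat ++ rword r 0 (i + k).toNat := by
  set k₁ := (-i).toNat with hk₁
  set k₂ := (i + k).toNat with hk₂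
  have hk : k = k₁ + k₂ := by omega
  have h3 : cfgWord (glue l r) i k = cfgWord (glue l r) i k₁ ++ cfgWord (glue l r) (i + k₁) k₂ := by
    rw [← cfgWord_add, ← hk]
  rw [h3]
  congr 1
  · unfold cfgWord lword
    refine ofFn_congr' fun t => ?_
    rw [glue_neg _ _ (by omega : i + ((t : ℕ) : ℤ) < 0)]
    congr 1
    have := t.2
    omega
  · have hi : i + (k₁ : ℤ) = 0 := by omega
    rw [hi, cfgWord_glue_right _ _ le_rfl]
    rfl

lemma lword_succ (l : ℕ → A) (Q : ℕ) : lword l (Q + 1) = l Q :: lword l Q := by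
  unfold lword
  rw [List.ofFn_succ]
  congr 1
  refine ofFn_congr' fun t => ?_
  show l (Q + 1 - 1 - ((t : ℕ) + 1)) = l (Q - 1 - (t : ℕ))
  congr 1
  omega

lemma lword_extendRay (l : ℕ → A) (a : A) (Q : ℕ) :
    lword (extendRay l a) (Q + 1) = lword l Q ++ [a] := by
  unfold lword
  rw [List.ofFn_add (m := 1)]
  congr 1
  · refine ofFn_congr' fun t => ?_
    show extendRay l a (Q + 1 - 1 - ((Fin.castAdd 1 t : Fin (Q + 1)) : ℕ)) = l (Q - 1 - (t : ℕ))
    have hc : ((Fin.castAdd 1 t : Fin (Q + 1)) : ℕ) = (t : ℕ) := rfl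
    rw [hc]
    unfold extendRay
    have := t.2
    rw [if_neg (by omega)]
    congr 1
    omega
  · simp only [List.ofFn_succ, List.ofFn_zero]
    show [extendRay l a (Q + 1 - 1 - (Q + 0))] = [a]
    have h1 : Q + 1 - 1 - (Q + 0) = 0 := by omega
    rw [h1]
    rfl

lemma rword_succ (r : ℕ → A) (i k : ℕ) : rword r i (k + 1) = r i :: rword r (i + 1) k := by
  unfold rword
  rw [List.ofFn_succ]
  congr 1
  refine ofFn_congr' fun t => ?_
  show r (i + ((t : ℕ) + 1)) = r (i + 1 + (t : ℕ))
  congr 1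
  omega

lemma rword_consRay_zero (a : A) (r : ℕ → A) (k : ℕ) :
    rword (consRay a r) 0 (k + 1) = a :: rword r 0 k := by
  rw [rword_succ]
  congr 1
  unfold rword
  refine ofFn_congr' fun t => ?_
  show consRay a r (0 + 1 + (t : ℕ)) = r (0 + (t : ℕ))
  unfold consRay
  rw [if_neg (by omega)]
  congr 1
  omega

lemma rword_consRay_succ (a : A) (r : ℕ → A) (i k : ℕ) :
    rword (consRay a r) (i + 1) k = rword r i k := by
  unfold rword
  refine ofFn_congr' fun t => ?_
  show consRay a r (i + 1 + (t : ℕ)) = r (i + (t : ℕ))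
  unfold consRay
  rw [if_neg (by omega)]
  congr 1
  omega

end Words

section GlueShift

variable {A : Type*}

lemma glue_extendRay (l r : ℕ → A) (a : A) :
    glue (extendRay l a) r = shiftMap (glue l (consRay a r)) := by
  funext i
  show glue (extendRay l a) r i = glue l (consRay a r) (i + 1)
  rcases lt_trichotomy i (-1) with h | h | h
  · rw [glue_neg _ _ (by omega), glue_neg _ _ (by omega)]
    show extendRay l a (-1 - i).toNat = _
    unfold extendRay
    rw [if_neg (by omega)]
    congr 1
    omega
  · subst h
    rw [glue_neg _ _ (by omega), glue_nonneg _ _ (by omega)]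
    show extendRay l a (-1 - (-1)).toNat = consRay a r ((-1 + 1 : ℤ)).toNat
    norm_num
    rfl
  · rw [glue_nonneg _ _ (by omega), glue_nonneg _ _ (by omega)]
    show r i.toNat = consRay a r (i + 1).toNat
    unfold consRay
    rw [if_neg (by omega)]
    congr 1
    omega

lemma leftRay_shiftMap (x : ℤ → A) :
    leftRay (shiftMap x) = extendRay (leftRay x) (x 0) := by
  funext m
  show x (-1 - (m : ℤ) + 1) = extendRay (leftRay x) (x 0) m
  unfold extendRay
  by_cases h : m = 0
  · subst h; rw [if_pos rfl]; norm_num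
  · rw [if_neg h]
    show _ = x (-1 - ((m - 1 : ℕ) : ℤ))
    congr 1
    omega

lemma leftRay_shiftInvMap (x : ℤ → A) :
    leftRay (shiftInvMap x) = fun k => leftRay x (k + 1) := by
  funext m
  show x (-1 - (m : ℤ) - 1) = x (-1 - ((m + 1 : ℕ) : ℤ))
  congr 1
  push_cast
  ring

end GlueShift

section DyckBasic

variable {n : ℕ}

lemma mem_dyck_iff {x : ℤ → Fin n ⊕ Fin n} :
    x ∈ Dyck n ↔ ∀ (i : ℤ) (k : ℕ), runW [] (cfgWord x i k) ≠ none := by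
  unfold Dyck
  simp only [Set.mem_setOf_eq, mismatch_iff_runW]

lemma dyck_shiftMap {x : ℤ → Fin n ⊕ Fin n} (hx : x ∈ Dyck n) : shiftMap x ∈ Dyck n := by
  rw [mem_dyck_iff] at hx ⊢
  intro i k
  rw [cfgWord_shiftMap]
  exact hx _ _

lemma dyck_shiftInvMap {x : ℤ → Fin n ⊕ Fin n} (hx : x ∈ Dyck n) : shiftInvMap x ∈ Dyck n := by
  rw [mem_dyck_iff] at hx ⊢
  intro i k
  rw [cfgWord_shiftInvMap]
  exact hx _ _

lemma shiftInvMap_shiftMap (x : ℤ → A) : shiftInvMap (shiftMap x) = x := by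
  funext i
  show x (i - 1 + 1) = x i
  congr 1
  ring

lemma dyck_shiftMap_iff {x : ℤ → Fin n ⊕ Fin n} : shiftMap x ∈ Dyck n ↔ x ∈ Dyck n := by
  constructor
  · intro h
    have := dyck_shiftInvMap h
    rwa [shiftInvMap_shiftMap] at this
  · exact dyck_shiftMap

/-- Key shift property of follower sets. -/
lemma mem_foll_extendRay {l r : ℕ → Fin n ⊕ Fin n} {a : Fin n ⊕ Fin n} :
    r ∈ foll (Dyck n) (extendRay l a) ↔ consRay a r ∈ foll (Dyck n) l := by
  show glue (extendRay l a) r ∈ Dyck n ↔ glue l (consRay a r) ∈ Dyck n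
  rw [glue_extendRay, dyck_shiftMap_iff]

lemma foll_nonempty {l : ℕ → Fin n ⊕ Fin n} (hl : l ∈ LeftRays (Dyck n)) :
    (foll (Dyck n) l).Nonempty := by
  obtain ⟨x₀, hx₀, rfl⟩ := hl
  exact ⟨rightRay x₀, show glue (leftRay x₀) (rightRay x₀) ∈ Dyck n by
    rwa [glue_leftRay_rightRay]⟩

lemma extendRay_mem_leftRays {l r : ℕ → Fin n ⊕ Fin n} {a : Fin n ⊕ Fin n}
    (h : consRay a r ∈ foll (Dyck n) l) : extendRay l a ∈ LeftRays (Dyck n) := by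
  refine ⟨shiftMap (glue l (consRay a r)), dyck_shiftMap h, ?_⟩
  rw [leftRay_shiftMap, leftRay_glue]
  congr 1

lemma dropRay_mem_leftRays {l : ℕ → Fin n ⊕ Fin n} (hl : l ∈ LeftRays (Dyck n)) (c : ℕ) :
    (fun k => l (k + c)) ∈ LeftRays (Dyck n) := by
  induction c with
  | zero => simpa using hl
  | succ c ih =>
      obtain ⟨x₀, hx₀, hx⟩ := ih
      refine ⟨shiftInvMap x₀, dyck_shiftInvMap hx₀, ?_⟩
      rw [leftRay_shiftInvMap, hx]
      funext k
      show l (k + 1 + c) = l (k + (c + 1))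
      congr 1
      omega

/-- Follower-set spanning characterization. -/
lemma glue_mem_dyck_iff {l : ℕ → Fin n ⊕ Fin n} {x₀ : ℤ → Fin n ⊕ Fin n}
    (hx₀ : x₀ ∈ Dyck n) (hl : l = leftRay x₀) (r : ℕ → Fin n ⊕ Fin n) :
    glue l r ∈ Dyck n ↔ (∀ i k, runW [] (rword r i k) ≠ none) ∧
      (∀ Q k, runW [] (lword l Q ++ rword r 0 k) ≠ none) := by
  constructor
  · intro h
    rw [mem_dyck_iff] at h
    constructor
    · intro i k
      have h1 := cfgWord_glue_right l r (show (0:ℤ) ≤ (i : ℤ) by omega) k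
      have h2 : ((i : ℤ)).toNat = i := by omega
      rw [h2] at h1
      rw [← h1]
      exact h _ _
    · intro Q k
      rcases Nat.eq_zero_or_pos k with rfl | hk
      · have hr0 : rword r 0 0 = [] := rfl
        rw [hr0, List.append_nil]
        have hleft := cfgWord_glue_left hl r
          (show (-(Q:ℤ)) + (Q:ℕ) ≤ 0 by push_cast; omega)
        rw [hl, lword_leftRay, ← hleft]
        exact h _ _
      rcases Nat.eq_zero_or_pos Q with rfl | hQ
      · have hl0 : lword l 0 = [] := rfl
        rw [hl0, List.nil_append]
        have h1 := cfgWord_glue_right l r (le_refl (0:ℤ)) k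
        have h2 : (0 : ℤ).toNat = 0 := rfl
        rw [h2] at h1
        rw [← h1]
        exact h _ _
      · have hspan := cfgWord_glue_span l r
          (show -(Q:ℤ) < 0 by omega) (show 0 < -(Q:ℤ) + ((Q + k : ℕ) : ℤ) by push_cast; omega)
        have e1 : (-(-(Q:ℤ))).toNat = Q := by omega
        have e2 : (-(Q:ℤ) + ((Q + k : ℕ) : ℤ)).toNat = k := by push_cast; omega
        rw [e1, e2] at hspan
        rw [← hspan]
        exact h _ _
  · rintro ⟨hr, hs⟩
    rw [mem_dyck_iff]
    intro i k
    rcases le_or_gt 0 i with hi | hi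
    · rw [cfgWord_glue_right l r hi]
      exact hr _ _
    rcases le_or_gt (i + k) 0 with hik | hik
    · rw [cfgWord_glue_left hl r hik]
      exact mem_dyck_iff.mp hx₀ _ _
    · rw [cfgWord_glue_span l r hi hik]
      exact hs _ _

lemma lword_ne_none {l : ℕ → Fin n ⊕ Fin n} (hl : l ∈ LeftRays (Dyck n)) (Q : ℕ) :
    runW [] (lword l Q) ≠ none := by
  obtain ⟨x₀, hx₀, rfl⟩ := hl
  rw [lword_leftRay]
  exact mem_dyck_iff.mp hx₀ _ _

lemma lword_stack {l : ℕ → Fin n ⊕ Fin n} (hl : l ∈ LeftRays (Dyck n)) (Q : ℕ) :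
    ∃ s, runW [] (lword l Q) = some s :=
  Option.ne_none_iff_exists'.mp (lword_ne_none hl Q)

/-- Successive stacks of a valid left ray extend each other at the bottom. -/
lemma stack_succ_prefix {l : ℕ → Fin n ⊕ Fin n} (hl : l ∈ LeftRays (Dyck n)) {Q : ℕ}
    {s s' : List (Fin n)} (h : runW [] (lword l Q) = some s)
    (h' : runW [] (lword l (Q + 1)) = some s') : s <+: s' := by
  rw [lword_succ] at h'
  have hb : ∃ b₁, dstep ([] : List (Fin n)) (l Q) = some b₁ := by
    match hlQ : l Q with
    | .inl i => exact ⟨[i], rfl⟩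
    | .inr i => exact ⟨[], rfl⟩
  obtain ⟨b₁, hb₁⟩ := hb
  have h'' : runW b₁ (lword l Q) = some s' := by
    show _ = _
    rw [show runW ([] : List (Fin n)) (l Q :: lword l Q)
        = runW b₁ (lword l Q) from by simp [runW, hb₁]] at h'
    exact h'
  rcases runW_bottom (lword l Q) [] b₁ with hnone | ⟨σ₂, b', _, hrun, hrun0⟩
  · rw [List.nil_append] at hnone
    rw [hnone] at h''
    cases h''
  · rw [List.nil_append] at hrun
    rw [hrun] at h''
    rw [h] at hrun0
    have h1 : s = σ₂ := Option.some_injective _ hrun0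
    have h2 : σ₂ ++ b' = s' := Option.some_injective _ h''
    subst h1
    exact ⟨b', h2⟩

lemma stack_prefix_mono {l : ℕ → Fin n ⊕ Fin n} (hl : l ∈ LeftRays (Dyck n)) {Q Q' : ℕ}
    (hQ : Q ≤ Q') {s s' : List (Fin n)} (h : runW [] (lword l Q) = some s)
    (h' : runW [] (lword l Q') = some s') : s <+: s' := by
  revert h'
  induction Q', hQ using Nat.le_induction generalizing s' with
  | base =>
      intro h'
      rw [h] at h'
      cases h'
      exact List.prefix_refl _
  | succ Q' hQQ' ih =>
      intro h'
      obtain ⟨s₁, hs₁⟩ := lword_stack hl Q'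
      exact (ih hs₁).trans (stack_succ_prefix hl hs₁ h')

lemma stack_head_coherent {l : ℕ → Fin n ⊕ Fin n} (hl : l ∈ LeftRays (Dyck n)) {Q₁ Q₂ : ℕ}
    {c c' : Fin n} {t₁ t₂ : List (Fin n)} (h₁ : runW [] (lword l Q₁) = some (c :: t₁))
    (h₂ : runW [] (lword l Q₂) = some (c' :: t₂)) : c = c' := by
  rcases le_total Q₁ Q₂ with h | h
  · obtain ⟨k, hk⟩ := stack_prefix_mono hl h h₁ h₂
    rw [List.cons_append] at hk
    exact (List.cons.injEq .. ▸ hk).1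
  · obtain ⟨k, hk⟩ := stack_prefix_mono hl h h₂ h₁
    rw [List.cons_append] at hk
    exact ((List.cons.injEq .. ▸ hk).1).symm

lemma runW_all_inr {w : List (Fin n ⊕ Fin n)} (h : ∀ a ∈ w, ∃ c, a = Sum.inr c) :
    runW [] w = some [] := by
  induction w with
  | nil => rfl
  | cons a w ih =>
      obtain ⟨c, rfl⟩ := h a (by simp)
      show runW [] w = some []
      exact ih fun a ha => h a (by simp [ha])

end DyckBasic

section RayCore

variable {n : ℕ}

lemma runW_cons_inl (σ : List (Fin n)) (i : Fin n) (w : List (Fin n ⊕ Fin n)) :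
    runW σ (Sum.inl i :: w) = runW (i :: σ) w := rfl

lemma runW_cons_inr_nil (c : Fin n) (w : List (Fin n ⊕ Fin n)) :
    runW [] (Sum.inr c :: w) = runW [] w := rfl

lemma runW_cons_inr_cons (c : Fin n) (σ : List (Fin n)) (w : List (Fin n ⊕ Fin n)) :
    runW (c :: σ) (Sum.inr c :: w) = runW σ w := by
  show (match dstep (c :: σ) (Sum.inr c) with
    | none => none
    | some s' => runW s' w) = runW σ w
  have : dstep (c :: σ) (Sum.inr c) = some σ := by simp [dstep]
  rw [this]

lemma rword_zero (r : ℕ → Fin n ⊕ Fin n) (i : ℕ) : rword r i 0 = [] := rfl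

lemma rword_one (r : ℕ → Fin n ⊕ Fin n) (i : ℕ) : rword r i 1 = [r i] := by
  unfold rword
  simp only [List.ofFn_succ, List.ofFn_zero]
  congr 1

lemma lword_zero (l : ℕ → Fin n ⊕ Fin n) : lword l 0 = [] := rfl

/-- Monotonicity of spanning conditions in the depth `Q`. -/
lemma span_mono {l : ℕ → Fin n ⊕ Fin n} (hl : l ∈ LeftRays (Dyck n)) {Q Q' : ℕ}
    (hQ : Q ≤ Q') (ρ : List (Fin n ⊕ Fin n))
    (h : runW [] (lword l Q' ++ ρ) ≠ none) : runW [] (lword l Q ++ ρ) ≠ none := by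
  obtain ⟨s, hs⟩ := lword_stack hl Q
  obtain ⟨s', hs'⟩ := lword_stack hl Q'
  obtain ⟨b, hb⟩ := stack_prefix_mono hl hQ hs hs'
  rw [runW_append, hs'] at h
  rw [runW_append, hs]
  simp only [Option.bind_some] at h ⊢
  rw [← hb] at h
  exact runW_mono_ne_none h

/-- Adjacent mismatched brackets are forbidden. -/
lemma not_mem_foll_mismatch {l r : ℕ → Fin n ⊕ Fin n} {i j : Fin n} (hij : i ≠ j) :
    consRay (Sum.inl i) (consRay (Sum.inr j) r) ∉ foll (Dyck n) l := by
  intro h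
  have h2 := mem_dyck_iff.mp h 0 2
  apply h2
  have hw : cfgWord (glue l (consRay (Sum.inl i) (consRay (Sum.inr j) r))) 0 2
      = [Sum.inl i, Sum.inr j] := by
    rw [cfgWord_glue_right _ _ le_rfl]
    show rword _ 0 2 = _
    rw [show (2:ℕ) = 1 + 1 from rfl, rword_consRay_zero, rword_consRay_zero, rword_zero]
  rw [hw]
  show (match dstep [] (Sum.inl i) with
    | none => none
    | some s' => runW s' [Sum.inr j]) = none
  show runW [i] [Sum.inr j] = none
  show (match dstep [i] (Sum.inr j) with
    | none => none
    | some s' => runW s' []) = none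
  have : dstep [i] (Sum.inr j) = (none : Option (List (Fin n))) := by
    simp only [dstep, ite_eq_right_iff]
    intro hji
    exact absurd hji.symm hij
  rw [this]

/-- Inserting/deleting a matched pair at the glue point. -/
lemma consPair_mem_foll_iff {l : ℕ → Fin n ⊕ Fin n} {x₀ : ℤ → Fin n ⊕ Fin n}
    (hx₀ : x₀ ∈ Dyck n) (hl : l = leftRay x₀) (r : ℕ → Fin n ⊕ Fin n) (i : Fin n) :
    consRay (Sum.inl i) (consRay (Sum.inr i) r) ∈ foll (Dyck n) l ↔ r ∈ foll (Dyck n) l := by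
  set cc := consRay (Sum.inl i) (consRay (Sum.inr i) r) with hcc
  have hcck : ∀ σ : List (Fin n), ∀ k, runW σ (rword cc 0 (k + 2)) = runW σ (rword r 0 k) := by
    intro σ k
    have : rword cc 0 (k + 2) = Sum.inl i :: Sum.inr i :: rword r 0 k := by
      rw [show k + 2 = (k + 1) + 1 from rfl, hcc, rword_consRay_zero, rword_consRay_zero]
    rw [this, runW_cons_inl, runW_cons_inr_cons]
  rw [show (foll (Dyck n) l : Set _) = foll (Dyck n) l from rfl]
  show glue l cc ∈ Dyck n ↔ glue l r ∈ Dyck n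
  rw [glue_mem_dyck_iff hx₀ hl, glue_mem_dyck_iff hx₀ hl]
  constructor
  · rintro ⟨hv, hs⟩
    constructor
    · intro a k
      have : rword r a k = rword cc (a + 2) k := by
        rw [hcc, show a + 2 = (a + 1) + 1 from rfl, rword_consRay_succ, rword_consRay_succ]
      rw [this]
      exact hv _ _
    · intro Q k
      have := hs Q (k + 2)
      rw [runW_append] at this ⊢
      obtain ⟨s, hsQ⟩ := lword_stack ⟨x₀, hx₀, hl.symm⟩ Q
      rw [hsQ] at this ⊢
      simp only [Option.bind_some] at this ⊢
      rw [hcck s k] at this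
      exact this
  · rintro ⟨hv, hs⟩
    constructor
    · intro a k
      match a, k with
      | _, 0 => rw [rword_zero]; simp [runW]
      | 0, 1 =>
          rw [rword_one]
          show runW [i] [] ≠ none
          simp [runW]
      | 0, (k + 2) =>
          rw [hcck [] k]
          exact hv 0 k
      | 1, (k + 1) =>
          have : rword cc 1 (k + 1) = Sum.inr i :: rword r 0 k := by
            rw [hcc, show (1:ℕ) = 0 + 1 from rfl, rword_consRay_succ, rword_consRay_zero]
          rw [this, runW_cons_inr_nil]
          exact hv 0 k
      | (a + 2), (k + 1) =>
          have : rword cc (a + 2) (k + 1) = rword r a (k + 1) := by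
            rw [hcc, show a + 2 = (a + 1) + 1 from rfl, rword_consRay_succ, rword_consRay_succ]
          rw [this]
          exact hv _ _
    · intro Q k
      obtain ⟨s, hsQ⟩ := lword_stack ⟨x₀, hx₀, hl.symm⟩ Q
      match k with
      | 0 =>
          rw [rword_zero, List.append_nil, hsQ]
          simp
      | 1 =>
          rw [runW_append, hsQ]
          simp only [Option.bind_some]
          rw [hcc, rword_one]
          show runW s [Sum.inl i] ≠ none
          show (some (i :: s) : Option (List (Fin n))) ≠ none
          simp
      | (k + 2) =>
          have := hs Q k
          rw [runW_append, hsQ] at this ⊢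
          simp only [Option.bind_some] at this ⊢
          rw [hcck s k]
          exact this

/-- Appending a right bracket to a left ray with empty stack does not change the
follower set. -/
lemma consInr_mem_foll_iff_empty {l : ℕ → Fin n ⊕ Fin n} {x₀ : ℤ → Fin n ⊕ Fin n}
    (hx₀ : x₀ ∈ Dyck n) (hl : l = leftRay x₀)
    (hemp : ∀ Q, runW [] (lword l Q) = some []) (r : ℕ → Fin n ⊕ Fin n) (j : Fin n) :
    consRay (Sum.inr j) r ∈ foll (Dyck n) l ↔ r ∈ foll (Dyck n) l := by
  set cc := consRay (Sum.inr j) r with hcc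
  show glue l cc ∈ Dyck n ↔ glue l r ∈ Dyck n
  rw [glue_mem_dyck_iff hx₀ hl, glue_mem_dyck_iff hx₀ hl]
  constructor
  · rintro ⟨hv, hs⟩
    constructor
    · intro a k
      have : rword r a k = rword cc (a + 1) k := by rw [hcc, rword_consRay_succ]
      rw [this]
      exact hv _ _
    · intro Q k
      have := hs Q (k + 1)
      rw [runW_append, hemp Q] at this ⊢
      simp only [Option.bind_some] at this ⊢
      rw [hcc, rword_consRay_zero, runW_cons_inr_nil] at this
      exact this
  · rintro ⟨hv, hs⟩
    constructor
    · intro a k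
      match a, k with
      | _, 0 => rw [rword_zero]; simp [runW]
      | 0, (k + 1) =>
          rw [hcc, rword_consRay_zero, runW_cons_inr_nil]
          exact hv 0 k
      | (a + 1), (k + 1) =>
          rw [hcc, rword_consRay_succ]
          exact hv _ _
    · intro Q k
      rw [runW_append, hemp Q]
      simp only [Option.bind_some]
      match k with
      | 0 => rw [rword_zero]; simp [runW]
      | (k + 1) =>
          rw [hcc, rword_consRay_zero, runW_cons_inr_nil]
          have := hs Q k
          rw [runW_append, hemp Q] at this
          simpa using this

end RayCore

section PopStructure

variable {n : ℕ}

lemma lword_length (l : ℕ → Fin n ⊕ Fin n) (Q : ℕ) : (lword l Q).length = Q := by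
  simp [lword]

lemma lword_getElem (l : ℕ → Fin n ⊕ Fin n) (Q : ℕ) (s : ℕ) (hs : s < Q) :
    (lword l Q)[s]'(by rw [lword_length]; exact hs) = l (Q - 1 - s) := by
  simp [lword]

/-- A nonempty stack of a left ray exposes an unmatched left bracket:
the ray factors as `l' (inl j) m` with `m` balanced, and dropping the balanced
part does not change the follower set. -/
lemma pop_structure {l : ℕ → Fin n ⊕ Fin n} (hlL : l ∈ LeftRays (Dyck n)) {K : ℕ} {j : Fin n}
    {tl : List (Fin n)} (hK : runW [] (lword l K) = some (j :: tl)) :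
    ∃ l', l' ∈ LeftRays (Dyck n) ∧ extendRay l' (Sum.inl j) ∈ LeftRays (Dyck n) ∧
      foll (Dyck n) l = foll (Dyck n) (extendRay l' (Sum.inl j)) := by
  obtain ⟨u, m, hw, hm, hu⟩ := runW_key (lword l K).length _ j tl le_rfl hK
  set M := m.length with hM
  have hlen : u.length + (1 + M) = K := by
    have := congrArg List.length hw
    rw [lword_length] at this
    simp at this
    omega
  set l' : ℕ → Fin n ⊕ Fin n := fun k => l (k + (M + 1)) with hl'
  have hl'L : l' ∈ LeftRays (Dyck n) := dropRay_mem_leftRays hlL (M + 1)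
  have hlM : l M = Sum.inl j := by
    have h1 : (lword l K)[u.length]'(by rw [lword_length]; omega) = l (K - 1 - u.length) :=
      lword_getElem l K u.length (by omega)
    have h2 : (lword l K)[u.length]'(by rw [lword_length]; omega) = Sum.inl j := by
      rw [List.getElem_of_eq hw]
      rw [List.getElem_append_right (le_refl u.length)]
      simp
    rw [h1] at h2
    rw [show M = K - 1 - u.length by omega]
    exact h2
  have hext_eq : extendRay l' (Sum.inl j) = fun k => l (k + M) := by
    funext k
    unfold extendRay
    by_cases hk : k = 0
    · subst hk
      rw [if_pos rfl]
      show Sum.inl j = l (0 + M)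
      rw [show 0 + M = M from by omega, hlM]
    · rw [if_neg hk]
      show l' (k - 1) = l (k + M)
      rw [hl']
      show l ((k - 1) + (M + 1)) = l (k + M)
      congr 1
      omega
  have hextL : extendRay l' (Sum.inl j) ∈ LeftRays (Dyck n) := by
    rw [hext_eq]
    exact dropRay_mem_leftRays hlL M
  have hu_eq : u = lword l' u.length := by
    refine List.ext_getElem (by rw [lword_length]) ?_
    intro s hs hs'
    have h1 : (lword l K)[s]'(by rw [lword_length]; omega) = l (K - 1 - s) :=
      lword_getElem l K s (by omega)
    have h2 : (lword l K)[s]'(by rw [lword_length]; omega) = u[s] := by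
      rw [List.getElem_of_eq hw]
      exact List.getElem_append_left hs
    rw [h1] at h2
    rw [← h2, lword_getElem l' u.length s (by rw [lword_length] at hs'; exact hs')]
    rw [hl']
    show l (K - 1 - s) = l ((u.length - 1 - s) + (M + 1))
    congr 1
    omega
  have hW1 : ∀ t' : ℕ, lword l (K + t') = lword l' (u.length + t') ++ (Sum.inl j :: m) := by
    intro t'
    induction t' with
    | zero =>
        rw [Nat.add_zero, Nat.add_zero, hw, ← hu_eq]
    | succ t' ih =>
        rw [show K + (t' + 1) = (K + t') + 1 from rfl, lword_succ,
          show u.length + (t' + 1) = (u.length + t') + 1 from rfl, lword_succ, ih]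
        rw [List.cons_append]
        congr 1
        rw [hl']
        show l (K + t') = l ((u.length + t') + (M + 1))
        congr 1
        omega
  have hS1 : ∀ t' : ℕ, runW [] (lword l (K + t'))
      = runW [] (lword (extendRay l' (Sum.inl j)) (u.length + t' + 1)) := by
    intro t'
    rw [hW1 t', lword_extendRay, runW_append, runW_append]
    congr 1
    funext σ
    rw [runW_cons_inl]
    have h1 : runW (j :: σ) m = some (j :: σ) := reducesToOne_runW hm _
    have h2 : runW σ [Sum.inl j] = some (j :: σ) := rfl
    rw [h1, h2]
  obtain ⟨x₀, hx₀, hlx₀⟩ := hlL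
  obtain ⟨x₁, hx₁, hlx₁⟩ := id hextL
  refine ⟨l', hl'L, hextL, ?_⟩
  ext r
  show glue l r ∈ Dyck n ↔ glue (extendRay l' (Sum.inl j)) r ∈ Dyck n
  rw [glue_mem_dyck_iff hx₀ hlx₀.symm, glue_mem_dyck_iff hx₁ hlx₁.symm]
  constructor
  · rintro ⟨hv, hs⟩
    refine ⟨hv, ?_⟩
    intro Q k
    refine span_mono ⟨x₁, hx₁, hlx₁⟩ (show Q ≤ u.length + Q + 1 by omega) _ ?_
    rw [runW_append, ← hS1 Q, ← runW_append]
    exact hs (K + Q) k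
  · rintro ⟨hv, hs⟩
    refine ⟨hv, ?_⟩
    intro Q k
    refine span_mono ⟨x₀, hx₀, hlx₀⟩ (show Q ≤ K + Q by omega) _ ?_
    rw [runW_append, hS1 Q, ← runW_append]
    exact hs (u.length + Q + 1) k

/-- Structure of a β-edge of the Krieger graph: a self-loop or the reversal of
an α-edge. -/
lemma beta_edge_cases {l : ℕ → Fin n ⊕ Fin n} (hlL : l ∈ LeftRays (Dyck n)) {j : Fin n}
    (hlj : extendRay l (Sum.inr j) ∈ LeftRays (Dyck n)) :
    foll (Dyck n) (extendRay l (Sum.inr j)) = foll (Dyck n) l ∨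
    ∃ l', l' ∈ LeftRays (Dyck n) ∧ extendRay l' (Sum.inl j) ∈ LeftRays (Dyck n) ∧
      foll (Dyck n) l = foll (Dyck n) (extendRay l' (Sum.inl j)) ∧
      foll (Dyck n) (extendRay l (Sum.inr j)) = foll (Dyck n) l' := by
  obtain ⟨x₀, hx₀, hlx₀⟩ := hlL
  by_cases hemp : ∀ Q, runW [] (lword l Q) = some []
  · left
    ext r
    rw [mem_foll_extendRay]
    exact consInr_mem_foll_iff_empty hx₀ hlx₀.symm hemp r j
  · right
    push_neg at hemp
    obtain ⟨K, hKne⟩ := hemp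
    obtain ⟨s, hsK⟩ := lword_stack ⟨x₀, hx₀, hlx₀⟩ K
    match s, hsK with
    | [], hsK => exact absurd hsK hKne
    | (p :: tl), hsK =>
        have hpj : p = j := by
          by_contra hne
          have hval := lword_ne_none hlj (K + 1)
          rw [lword_extendRay, runW_concat, hsK] at hval
          simp only [Option.bind_some] at hval
          apply hval
          show (if j = p then some tl else none) = none
          rw [if_neg (fun h => hne h.symm)]
        subst hpj
        obtain ⟨l', hl'L, hextL, hfoll⟩ := pop_structure ⟨x₀, hx₀, hlx₀⟩ hsK
        obtain ⟨x₁, hx₁, hlx₁⟩ := hl'L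
        refine ⟨l', ⟨x₁, hx₁, hlx₁⟩, hextL, hfoll, ?_⟩
        ext r
        rw [mem_foll_extendRay]
        have h1 : consRay (Sum.inr p) r ∈ foll (Dyck n) l
            ↔ consRay (Sum.inr p) r ∈ foll (Dyck n) (extendRay l' (Sum.inl p)) := by
          rw [hfoll]
        rw [h1, mem_foll_extendRay]
        exact consPair_mem_foll_iff hx₁ hlx₁.symm r p

end PopStructure

section StackTransfer

variable {n : ℕ}

open scoped Classical in
/-- The `t`-th letter (from the top) of the limiting stack of a left ray. -/
noncomputable def popLetter (j₀ : Fin n) (l : ℕ → Fin n ⊕ Fin n) (t : ℕ) : Fin n :=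
  if h : ∃ c : Fin n, ∃ Q s, runW [] (lword l Q) = some s ∧ s[t]? = some c then h.choose
  else j₀

lemma popLetter_spec {l : ℕ → Fin n ⊕ Fin n} (hlL : l ∈ LeftRays (Dyck n)) (j₀ : Fin n)
    {Q : ℕ} {s : List (Fin n)} {t : ℕ} {c : Fin n}
    (hQ : runW [] (lword l Q) = some s) (hc : s[t]? = some c) :
    popLetter j₀ l t = c := by
  classical
  unfold popLetter
  have hex : ∃ c : Fin n, ∃ Q s, runW [] (lword l Q) = some s ∧ s[t]? = some c :=
    ⟨c, Q, s, hQ, hc⟩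
  rw [dif_pos hex]
  obtain ⟨Q₁, s₁, hQ₁, hc₁⟩ := hex.choose_spec
  have key : ∀ {a b : List (Fin n)}, a <+: b → a[t]? = some c → b[t]? = some hex.choose →
      hex.choose = c := by
    rintro a b ⟨k, rfl⟩ ha hb
    have ht : t < a.length := by
      obtain ⟨h', _⟩ := List.getElem?_eq_some_iff.mp ha
      exact h'
    rw [List.getElem?_append_left ht, ha] at hb
    exact (Option.some_injective _ hb).symm
  rcases le_total Q Q₁ with hle | hle
  · exact key (stack_prefix_mono hlL hle hQ hQ₁) hc hc₁
  · have ht : t < s₁.length := by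
      obtain ⟨h', _⟩ := List.getElem?_eq_some_iff.mp hc₁
      exact h'
    obtain ⟨k, hk⟩ := stack_prefix_mono hlL hle hQ₁ hQ
    rw [← hk, List.getElem?_append_left ht, hc₁] at hc
    exact Option.some_injective _ hc

/-- The maximal popping right ray of a left ray. -/
noncomputable def rmax (j₀ : Fin n) (l : ℕ → Fin n ⊕ Fin n) : ℕ → Fin n ⊕ Fin n :=
  fun t => Sum.inr (popLetter j₀ l t)

lemma runW_rword_inr {r : ℕ → Fin n ⊕ Fin n} (hr : ∀ t, ∃ c, r t = Sum.inr c) (i k : ℕ) :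
    runW [] (rword r i k) = some [] := by
  apply runW_all_inr
  intro a ha
  obtain ⟨t, ht⟩ := Set.mem_range.mp ((List.mem_ofFn' _ _).mp ha)
  rw [← ht]
  exact hr _

lemma runW_rmax {l : ℕ → Fin n ⊕ Fin n} (hlL : l ∈ LeftRays (Dyck n)) (j₀ : Fin n) :
    ∀ (k d Q : ℕ) (s : List (Fin n)), runW [] (lword l Q) = some s →
      runW (s.drop d) (rword (rmax j₀ l) d k) ≠ none := by
  intro k
  induction k with
  | zero =>
      intro d Q s h
      rw [rword_zero]
      simp [runW]
  | succ k ih =>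
      intro d Q s h
      rw [rword_succ]
      cases hdrop : s.drop d with
      | nil =>
          show runW [] (Sum.inr (popLetter j₀ l d) :: rword (rmax j₀ l) (d + 1) k) ≠ none
          rw [runW_cons_inr_nil]
          have hnil : s.drop (d + 1) = [] :=
            List.drop_eq_nil_of_le (by have := List.drop_eq_nil_iff.mp hdrop; omega)
          have := ih (d + 1) Q s h
          rwa [hnil] at this
      | cons c rest =>
          have hd : d < s.length := by
            by_contra hge
            rw [List.drop_eq_nil_of_le (by omega)] at hdrop
            cases hdrop
          have hcons := List.drop_eq_getElem_cons (i := d) (l := s) hd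
          rw [hdrop] at hcons
          have hc : s[d] = c := (List.cons.injEq .. ▸ hcons).1.symm
          have hrest : rest = s.drop (d + 1) := (List.cons.injEq .. ▸ hcons).2
          have hpop : popLetter j₀ l d = c :=
            popLetter_spec hlL j₀ h (List.getElem?_eq_some_iff.mpr ⟨hd, hc⟩)
          show runW (c :: rest) (Sum.inr (popLetter j₀ l d) :: rword (rmax j₀ l) (d + 1) k)
            ≠ none
          rw [hpop, runW_cons_inr_cons, hrest]
          exact ih (d + 1) Q s h

lemma rmax_mem_foll {l : ℕ → Fin n ⊕ Fin n} {x₀ : ℤ → Fin n ⊕ Fin n} (hx₀ : x₀ ∈ Dyck n)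
    (hlx₀ : leftRay x₀ = l) (j₀ : Fin n) : rmax j₀ l ∈ foll (Dyck n) l := by
  have hlL : l ∈ LeftRays (Dyck n) := ⟨x₀, hx₀, hlx₀⟩
  show glue l (rmax j₀ l) ∈ Dyck n
  rw [glue_mem_dyck_iff hx₀ hlx₀.symm]
  constructor
  · intro i k
    rw [runW_rword_inr (r := rmax j₀ l) (fun t => ⟨popLetter j₀ l t, rfl⟩)]
    simp
  · intro Q k
    obtain ⟨s, hs⟩ := lword_stack hlL Q
    rw [runW_append, hs]
    simp only [Option.bind_some]
    have := runW_rmax hlL j₀ k 0 Q s hs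
    rwa [List.drop_zero] at this

lemma rmax_zero {l : ℕ → Fin n ⊕ Fin n} (hlL : l ∈ LeftRays (Dyck n)) (j₀ : Fin n)
    {Q : ℕ} {c : Fin n} {t' : List (Fin n)} (h : runW [] (lword l Q) = some (c :: t')) :
    rmax j₀ l 0 = Sum.inr c :=
  congrArg Sum.inr (popLetter_spec hlL j₀ h (by simp))

lemma ext_inr_mem_leftRays {l : ℕ → Fin n ⊕ Fin n} (hlL : l ∈ LeftRays (Dyck n))
    {Q : ℕ} {c : Fin n} {t' : List (Fin n)} (h : runW [] (lword l Q) = some (c :: t')) :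
    extendRay l (Sum.inr c) ∈ LeftRays (Dyck n) := by
  obtain ⟨x₀, hx₀, hlx₀⟩ := id hlL
  have hmem := rmax_mem_foll hx₀ hlx₀ c
  have heq : consRay (Sum.inr c) (fun t => rmax c l (t + 1)) = rmax c l := by
    funext t
    unfold consRay
    by_cases ht : t = 0
    · subst ht
      rw [if_pos rfl, rmax_zero hlL c h]
    · rw [if_neg ht]
      show rmax c l ((t - 1) + 1) = rmax c l t
      congr 1
      omega
  exact extendRay_mem_leftRays (heq ▸ hmem)

lemma const_inr_mem_of_empty {l : ℕ → Fin n ⊕ Fin n} {x₀ : ℤ → Fin n ⊕ Fin n}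
    (hx₀ : x₀ ∈ Dyck n) (hlx₀ : leftRay x₀ = l)
    (hemp : ∀ Q s, runW [] (lword l Q) = some s → s = []) (q : Fin n) :
    (fun _ => Sum.inr q : ℕ → Fin n ⊕ Fin n) ∈ foll (Dyck n) l := by
  show glue l _ ∈ Dyck n
  rw [glue_mem_dyck_iff hx₀ hlx₀.symm]
  constructor
  · intro i k
    rw [runW_rword_inr (fun t => ⟨q, rfl⟩)]
    simp
  · intro Q k
    obtain ⟨s, hs⟩ := lword_stack ⟨x₀, hx₀, hlx₀⟩ Q
    have := hemp Q s hs
    subst this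
    rw [runW_append, hs]
    simp only [Option.bind_some]
    rw [runW_rword_inr (fun t => ⟨q, rfl⟩)]
    simp

lemma const_inr_not_mem {l : ℕ → Fin n ⊕ Fin n} {x₀ : ℤ → Fin n ⊕ Fin n}
    (hx₀ : x₀ ∈ Dyck n) (hlx₀ : leftRay x₀ = l) {K : ℕ} {p : Fin n} {t' : List (Fin n)}
    (hK : runW [] (lword l K) = some (p :: t')) {q : Fin n} (hq : q ≠ p) :
    (fun _ => Sum.inr q : ℕ → Fin n ⊕ Fin n) ∉ foll (Dyck n) l := by
  intro hmem
  have hspan := ((glue_mem_dyck_iff hx₀ hlx₀.symm _).mp hmem).2 K 1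
  rw [rword_one, runW_append, hK] at hspan
  simp only [Option.bind_some] at hspan
  apply hspan
  show (match dstep (p :: t') (Sum.inr q) with
    | none => none
    | some s' => runW s' []) = none
  have : dstep (p :: t') (Sum.inr q) = (none : Option (List (Fin n))) := by
    simp only [dstep, ite_eq_right_iff]
    intro h'
    exact absurd h' hq
  rw [this]

/-- Transfer of stack bounds between left rays with equal follower sets. -/
lemma stack_bound_transfer (hn : 1 < n) :
    ∀ (d : ℕ) {l l' : ℕ → Fin n ⊕ Fin n}, l ∈ LeftRays (Dyck n) → l' ∈ LeftRays (Dyck n) →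
    foll (Dyck n) l = foll (Dyck n) l' →
    (∀ Q s, runW [] (lword l' Q) = some s → s.length ≤ d) →
    ∀ Q s, runW [] (lword l Q) = some s → s.length ≤ d := by
  haveI : Nontrivial (Fin n) := Fin.nontrivial_iff_two_le.mpr hn
  have transfer_empty : ∀ {l l' : ℕ → Fin n ⊕ Fin n}, l ∈ LeftRays (Dyck n) →
      l' ∈ LeftRays (Dyck n) → foll (Dyck n) l = foll (Dyck n) l' →
      (∀ Q s, runW [] (lword l' Q) = some s → s = []) →
      ∀ Q s, runW [] (lword l Q) = some s → s = [] := by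
    intro l l' hlL hl'L hfoll hemp' Q s hs
    match s, hs with
    | [], hs => rfl
    | (p :: t'), hs =>
        obtain ⟨x₀, hx₀, hlx₀⟩ := id hlL
        obtain ⟨x₁, hx₁, hlx₁⟩ := id hl'L
        obtain ⟨q, hq⟩ := exists_ne p
        exfalso
        apply const_inr_not_mem hx₀ hlx₀ hs hq
        rw [hfoll]
        exact const_inr_mem_of_empty hx₁ hlx₁ hemp' q
  intro d
  induction d with
  | zero =>
      intro l l' hlL hl'L hfoll hbd Q s hs
      have : s = [] := transfer_empty hlL hl'L hfoll
        (fun Q s h => List.eq_nil_of_length_eq_zero (Nat.le_zero.mp (hbd Q s h))) Q s hs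
      rw [this]
      simp
  | succ e ih =>
      intro l l' hlL hl'L hfoll hbd Q s hs
      by_cases hemp' : ∀ Q s, runW [] (lword l' Q) = some s → s = []
      · have : s = [] := transfer_empty hlL hl'L hfoll hemp' Q s hs
        rw [this]
        simp
      · push_neg at hemp'
        obtain ⟨K', s', hK', hs'ne⟩ := hemp'
        match s', hK', hs'ne with
        | (p :: t'), hK', _ =>
            match s, hs with
            | [], hs => simp
            | (c :: t), hs =>
                obtain ⟨x₀, hx₀, hlx₀⟩ := id hlL
                obtain ⟨x₁, hx₁, hlx₁⟩ := id hl'L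
                have hcp : c = p := by
                  have hmem : rmax c l ∈ foll (Dyck n) l' := by
                    rw [← hfoll]
                    exact rmax_mem_foll hx₀ hlx₀ c
                  have hspan := ((glue_mem_dyck_iff hx₁ hlx₁.symm _).mp hmem).2 K' 1
                  rw [rword_one, rmax_zero hlL c hs, runW_append, hK'] at hspan
                  simp only [Option.bind_some] at hspan
                  by_contra hne
                  apply hspan
                  show (match dstep (p :: t') (Sum.inr c) with
                    | none => none
                    | some s' => runW s' []) = none
                  have : dstep (p :: t') (Sum.inr c) = (none : Option (List (Fin n))) := by
                    simp only [dstep, ite_eq_right_iff]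
                    intro h'
                    exact absurd h' hne
                  rw [this]
                subst hcp
                have hextl : extendRay l (Sum.inr c) ∈ LeftRays (Dyck n) :=
                  ext_inr_mem_leftRays hlL hs
                have hextl' : extendRay l' (Sum.inr c) ∈ LeftRays (Dyck n) :=
                  ext_inr_mem_leftRays hl'L hK'
                have hfoll2 : foll (Dyck n) (extendRay l (Sum.inr c))
                    = foll (Dyck n) (extendRay l' (Sum.inr c)) := by
                  ext r
                  rw [mem_foll_extendRay, mem_foll_extendRay, hfoll]
                have hbd2 : ∀ Q₂ s₂, runW [] (lword (extendRay l' (Sum.inr c)) Q₂) = some s₂ →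
                    s₂.length ≤ e := by
                  intro Q₂ s₂ h₂
                  match Q₂, h₂ with
                  | 0, h₂ =>
                      rw [lword_zero] at h₂
                      cases h₂
                      simp
                  | (Q₂ + 1), h₂ =>
                      rw [lword_extendRay, runW_concat] at h₂
                      obtain ⟨s₃, hs₃⟩ := lword_stack hl'L Q₂
                      rw [hs₃] at h₂
                      simp only [Option.bind_some] at h₂
                      match s₃, hs₃, h₂ with
                      | [], hs₃, h₂ =>
                          have : s₂ = [] := by
                            have : dstep ([] : List (Fin n)) (Sum.inr c) = some [] := rfl
                            rw [this] at h₂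
                            exact (Option.some_injective _ h₂).symm
                          rw [this]
                          simp
                      | (c₃ :: t₃), hs₃, h₂ =>
                          have hc₃ : c₃ = c := stack_head_coherent hl'L hs₃ hK'
                          subst hc₃
                          have : dstep (c₃ :: t₃) (Sum.inr c₃) = some t₃ := by
                            simp [dstep]
                          rw [this] at h₂
                          have : t₃ = s₂ := Option.some_injective _ h₂
                          subst this
                          have := hbd Q₂ _ hs₃
                          simp at this ⊢
                          omega
                have hQ1 : runW [] (lword (extendRay l (Sum.inr c)) (Q + 1)) = some t := by
                  rw [lword_extendRay, runW_concat, hs]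
                  simp only [Option.bind_some]
                  show dstep (c :: t) (Sum.inr c) = some t
                  simp [dstep]
                have := ih hextl hextl' hfoll2 hbd2 (Q + 1) t hQ1
                simp at this ⊢
                omega

end StackTransfer

section FinStack

variable {n : ℕ}

/-- The vertex `v` is a follower set with stack bounded by `d`. -/
def FinStk (n : ℕ) (v : Set (ℕ → Fin n ⊕ Fin n)) (d : ℕ) : Prop :=
  ∃ l, l ∈ LeftRays (Dyck n) ∧ v = foll (Dyck n) l ∧
    ∀ Q s, runW [] (lword l Q) = some s → s.length ≤ d

lemma const_inr_mem_dyck (q : Fin n) : (fun _ => Sum.inr q : ℤ → Fin n ⊕ Fin n) ∈ Dyck n := by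
  rw [mem_dyck_iff]
  intro i k
  have : runW [] (cfgWord (fun _ => Sum.inr q : ℤ → Fin n ⊕ Fin n) i k) = some [] := by
    apply runW_all_inr
    intro a ha
    obtain ⟨t, ht⟩ := Set.mem_range.mp ((List.mem_ofFn' _ _).mp ha)
    exact ⟨q, ht.symm⟩
  rw [this]
  simp

lemma leftRay_const_inr (q : Fin n) :
    leftRay (fun _ => Sum.inr q : ℤ → Fin n ⊕ Fin n) = fun _ => Sum.inr q := rfl

lemma const_inr_mem_leftRays (q : Fin n) :
    (fun _ => Sum.inr q : ℕ → Fin n ⊕ Fin n) ∈ LeftRays (Dyck n) :=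
  ⟨fun _ => Sum.inr q, const_inr_mem_dyck q, rfl⟩

lemma lword_const_inr (q : Fin n) (Q : ℕ) :
    runW [] (lword (fun _ => Sum.inr q : ℕ → Fin n ⊕ Fin n) Q) = some [] := by
  apply runW_all_inr
  intro a ha
  obtain ⟨t, ht⟩ := Set.mem_range.mp ((List.mem_ofFn' _ _).mp ha)
  exact ⟨q, ht.symm⟩

lemma foll_const_inr (q : Fin n) :
    foll (Dyck n) (fun _ => Sum.inr q : ℕ → Fin n ⊕ Fin n) = RightRays (Dyck n) := by
  ext r
  constructor
  · intro hr
    exact ⟨glue (fun _ => Sum.inr q) r, hr, rightRay_glue _ _⟩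
  · rintro ⟨x, hx, rfl⟩
    show glue _ _ ∈ Dyck n
    rw [glue_mem_dyck_iff (const_inr_mem_dyck q) (leftRay_const_inr q).symm]
    constructor
    · intro i k
      rw [rword_rightRay]
      exact mem_dyck_iff.mp hx _ _
    · intro Q k
      rw [runW_append, lword_const_inr]
      simp only [Option.bind_some]
      rw [rword_rightRay]
      exact mem_dyck_iff.mp hx _ _

lemma follW_nil : follW (Dyck n) ([] : List (Fin n ⊕ Fin n)) = RightRays (Dyck n) := by
  ext r
  show wordThen [] r ∈ RightRays (Dyck n) ↔ r ∈ RightRays (Dyck n)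
  have : wordThen ([] : List (Fin n ⊕ Fin n)) r = r := by
    funext m
    simp [wordThen]
  rw [this]

lemma finStk_root (q : Fin n) : FinStk n (follW (Dyck n) []) 0 := by
  refine ⟨fun _ => Sum.inr q, const_inr_mem_leftRays q, ?_, ?_⟩
  · rw [follW_nil, ← foll_const_inr q]
  · intro Q s h
    rw [lword_const_inr] at h
    have : s = [] := (Option.some_injective _ h).symm
    rw [this]
    simp

lemma finStk_of_KEdge (hn : 1 < n) {u v : Set (ℕ → Fin n ⊕ Fin n)} {a : Fin n ⊕ Fin n}
    (he : KEdge (Dyck n) u a v) {d : ℕ} (hv : FinStk n v d) : FinStk n u (d + 1) := by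
  obtain ⟨l, hlL, hextL, hu, hveq⟩ := he
  obtain ⟨l₂, hl₂L, hv₂, hbd₂⟩ := hv
  have heq : foll (Dyck n) (extendRay l a) = foll (Dyck n) l₂ := by
    rw [← hveq, ← hv₂]
  have hbd : ∀ Q s, runW [] (lword (extendRay l a) Q) = some s → s.length ≤ d :=
    stack_bound_transfer hn d hextL hl₂L heq hbd₂
  refine ⟨l, hlL, hu, ?_⟩
  intro Q s hs
  have hQ1 : runW [] (lword (extendRay l a) (Q + 1))
      = (some s).bind (fun s' => dstep s' a) := by
    rw [lword_extendRay, runW_concat, hs]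
  match a with
  | .inl i =>
      have : runW [] (lword (extendRay l (Sum.inl i)) (Q + 1)) = some (i :: s) := hQ1
      have := hbd _ _ this
      simp at this ⊢
      omega
  | .inr c =>
      match s with
      | [] => simp
      | (c' :: t) =>
          by_cases hcc : c = c'
          · subst hcc
            have : runW [] (lword (extendRay l (Sum.inr c)) (Q + 1)) = some t := by
              rw [hQ1]
              show dstep (c :: t) (Sum.inr c) = some t
              simp [dstep]
            have := hbd _ _ this
            simp at this ⊢
            omega
          · exfalso
            apply lword_ne_none hextL (Q + 1)
            rw [hQ1]
            show dstep (c' :: t) (Sum.inr c) = none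
            simp [dstep, hcc]

lemma finStk_of_reach (hn : 1 < n) {v : Set (ℕ → Fin n ⊕ Fin n)}
    (h : KReach (Dyck n) v (follW (Dyck n) [])) : ∃ d, FinStk n v d := by
  induction h using Relation.ReflTransGen.head_induction_on with
  | refl => exact ⟨0, finStk_root ⟨0, by omega⟩⟩
  | head hstep _ ih =>
      obtain ⟨d, hd⟩ := ih
      obtain ⟨a, he⟩ := hstep
      exact ⟨d + 1, finStk_of_KEdge hn he hd⟩

lemma finStk_pop (hn : 1 < n) {l' : ℕ → Fin n ⊕ Fin n} (hl' : l' ∈ LeftRays (Dyck n))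
    {j : Fin n} (hext : extendRay l' (Sum.inl j) ∈ LeftRays (Dyck n)) {d : ℕ}
    (h : FinStk n (foll (Dyck n) (extendRay l' (Sum.inl j))) d) :
    ∃ e, d = e + 1 ∧ FinStk n (foll (Dyck n) l') e := by
  obtain ⟨l₂, hl₂, heq, hbd₂⟩ := h
  have hbd : ∀ Q s, runW [] (lword (extendRay l' (Sum.inl j)) Q) = some s → s.length ≤ d :=
    stack_bound_transfer hn d hext hl₂ heq hbd₂
  have hstep : ∀ Q s, runW [] (lword l' Q) = some s →
      runW [] (lword (extendRay l' (Sum.inl j)) (Q + 1)) = some (j :: s) := by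
    intro Q s hs
    rw [lword_extendRay, runW_concat, hs]
    rfl
  have hd1 : 1 ≤ d := by
    obtain ⟨s, hs⟩ := lword_stack hl' 0
    have := hbd _ _ (hstep 0 s hs)
    simp at this
    omega
  refine ⟨d - 1, by omega, l', hl', rfl, ?_⟩
  intro Q s hs
  have := hbd _ _ (hstep Q s hs)
  simp at this
  omega

end FinStack

section Graph

variable {n : ℕ}

lemma fischer_edge_data (e : FischerE (Dyck n) ([] : List (Fin n ⊕ Fin n))) :
    ∃ l, l ∈ LeftRays (Dyck n) ∧ extendRay l e.1.2.1 ∈ LeftRays (Dyck n) ∧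
      e.1.1 = foll (Dyck n) l ∧ e.1.2.2 = foll (Dyck n) (extendRay l e.1.2.1) := by
  obtain ⟨l, hl, h2, h3, h4⟩ := e.2.2.2
  exact ⟨l, hl, h2, h3, h4⟩

lemma alpha_ter_unique {l l' : ℕ → Fin n ⊕ Fin n} (hl : l ∈ LeftRays (Dyck n))
    (hl' : l' ∈ LeftRays (Dyck n)) {i i' : Fin n}
    (h : foll (Dyck n) (extendRay l (Sum.inl i)) = foll (Dyck n) (extendRay l' (Sum.inl i'))) :
    i = i' ∧ foll (Dyck n) l = foll (Dyck n) l' := by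
  obtain ⟨x₀, hx₀, hlx₀⟩ := id hl
  obtain ⟨x₁, hx₁, hlx₁⟩ := id hl'
  obtain ⟨r₀, hr₀⟩ := foll_nonempty hl
  have h1 : consRay (Sum.inl i) (consRay (Sum.inr i) r₀) ∈ foll (Dyck n) l :=
    (consPair_mem_foll_iff hx₀ hlx₀.symm r₀ i).mpr hr₀
  have h2 : consRay (Sum.inr i) r₀ ∈ foll (Dyck n) (extendRay l (Sum.inl i)) :=
    mem_foll_extendRay.mpr h1
  rw [h] at h2
  have h3 : consRay (Sum.inl i') (consRay (Sum.inr i) r₀) ∈ foll (Dyck n) l' :=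
    mem_foll_extendRay.mp h2
  have hii : i = i' := by
    by_contra hne
    exact not_mem_foll_mismatch (fun hee => hne hee.symm) h3
  subst hii
  refine ⟨rfl, ?_⟩
  ext r
  constructor
  · intro hr
    have ha := mem_foll_extendRay.mpr ((consPair_mem_foll_iff hx₀ hlx₀.symm r i).mpr hr)
    rw [h] at ha
    exact (consPair_mem_foll_iff hx₁ hlx₁.symm r i).mp (mem_foll_extendRay.mp ha)
  · intro hr
    have ha := mem_foll_extendRay.mpr ((consPair_mem_foll_iff hx₁ hlx₁.symm r i).mpr hr)
    rw [← h] at ha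
    exact (consPair_mem_foll_iff hx₀ hlx₀.symm r i).mp (mem_foll_extendRay.mp ha)

end Graph


theorem stmt13 (n : ℕ) (hn : 1 < n) :
    ¬ HasEvGeoProxPair (FischerGraph (Dyck n) []) := by
  rintro ⟨x, y, hx, hy, ⟨ix, hgx⟩, ⟨iy, hgy⟩, hprox1, hprox2⟩
  set G := FischerGraph (Dyck n) ([] : List (Fin n ⊕ Fin n)) with hG
  -- eventually all vertices along an eventually geodesic path are distinct
  have distinct : ∀ (z : ℤ → FischerE (Dyck n) ([] : List (Fin n ⊕ Fin n))) (i₀ : ℤ),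
      (∀ i : ℤ, i₀ ≤ i → ∀ m : ℕ, GeodesicSeg G z i m) →
      ∀ i j : ℤ, i₀ ≤ i → i₀ ≤ j → i < j → G.ini (z i) ≠ G.ini (z j) := by
    intro z i₀ hg i j hi hj hij heq
    have h1 : FinPath G 0 (fun _ => z j) := fun k => k.elim0
    have h2 : G.ini ((fun _ : Fin 1 => z j) 0) = G.ini (z i) := heq.symm
    have h3 : G.ter ((fun _ : Fin 1 => z j) (Fin.last 0))
        = G.ter (z (i + (((j - i).toNat : ℕ) : ℤ))) := by
      have hji : (j : ℤ) = i + (((j - i).toNat : ℕ) : ℤ) := by omega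
      show G.ter (z j) = _
      rw [← hji]
    have := hg i hi (j - i).toNat 0 (fun _ => z j) h1 h2 h3
    omega
  -- structure of β-labelled non-selfloop edges
  have betaForm : ∀ (z : ℤ → FischerE (Dyck n) ([] : List (Fin n ⊕ Fin n))),
      ∀ (t : ℤ) (j : Fin n), (z t).1.2.1 = Sum.inr j →
      G.ini (z t) ≠ G.ter (z t) →
      ∃ l', l' ∈ LeftRays (Dyck n) ∧ extendRay l' (Sum.inl j) ∈ LeftRays (Dyck n) ∧
        G.ini (z t) = foll (Dyck n) (extendRay l' (Sum.inl j)) ∧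
        G.ter (z t) = foll (Dyck n) l' := by
    intro z t j hlab hne
    obtain ⟨l, hlL, hextL, hini, hter⟩ := fischer_edge_data (z t)
    rw [hlab] at hextL hter
    rcases beta_edge_cases hlL hextL with hself | ⟨l', hl', hextl', hfoll, hforward⟩
    · exfalso
      apply hne
      show (z t).1.1 = (z t).1.2.2
      rw [hini, hter, hself]
    · refine ⟨l', hl', hextl', ?_, ?_⟩
      · show (z t).1.1 = _
        rw [hini, hfoll]
      · show (z t).1.2.2 = _
        rw [hter, hforward]
  -- eventually all labels are left brackets
  have allAlpha : ∀ (z : ℤ → FischerE (Dyck n) ([] : List (Fin n ⊕ Fin n))) (i₀ : ℤ),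
      BiPath G z →
      (∀ i j : ℤ, i₀ ≤ i → i₀ ≤ j → i < j → G.ini (z i) ≠ G.ini (z j)) →
      ∃ T : ℤ, i₀ ≤ T ∧ ∀ t : ℤ, T ≤ t → ∃ i, (z t).1.2.1 = Sum.inl i := by
    intro z i₀ hz hd
    have hsome : ∃ t : ℤ, i₀ ≤ t ∧ ∃ i, (z t).1.2.1 = Sum.inl i := by
      by_contra hall
      push_neg at hall
      have hpopform : ∀ t : ℤ, i₀ ≤ t → ∃ (j : Fin n) (l' : ℕ → Fin n ⊕ Fin n),
          l' ∈ LeftRays (Dyck n) ∧ extendRay l' (Sum.inl j) ∈ LeftRays (Dyck n) ∧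
          G.ini (z t) = foll (Dyck n) (extendRay l' (Sum.inl j)) ∧
          G.ini (z (t + 1)) = foll (Dyck n) l' := by
        intro t ht
        obtain ⟨j, hj⟩ : ∃ j, (z t).1.2.1 = Sum.inr j := by
          cases hc : (z t).1.2.1 with
          | inl i => exact absurd hc (hall t ht i)
          | inr j => exact ⟨j, rfl⟩
        have hne : G.ini (z t) ≠ G.ter (z t) := by
          intro he
          exact hd t (t + 1) ht (by omega) (by omega) (he.trans (hz t))
        obtain ⟨l', h1, h2, h3, h4⟩ := betaForm z t j hj hne
        exact ⟨j, l', h1, h2, h3, by rw [← hz t]; exact h4⟩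
      have hdesc : ∀ d : ℕ, ∀ t : ℤ, i₀ ≤ t → ¬ FinStk n (G.ini (z t)) d := by
        intro d
        induction d with
        | zero =>
            intro t ht hfs
            obtain ⟨j, l', hl', hext, hini, _⟩ := hpopform t ht
            rw [hini] at hfs
            obtain ⟨e, he, _⟩ := finStk_pop hn hl' hext hfs
            omega
        | succ d ih =>
            intro t ht hfs
            obtain ⟨j, l', hl', hext, hini, hini'⟩ := hpopform t ht
            rw [hini] at hfs
            obtain ⟨e, he, hfs'⟩ := finStk_pop hn hl' hext hfs
            have hed : e = d := by omega
            subst hed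
            apply ih (t + 1) (by omega)
            rw [hini']
            exact hfs'
      have hFV : FVertex (Dyck n) [] (G.ini (z i₀)) := (z i₀).2.1
      obtain ⟨d, hd'⟩ := finStk_of_reach hn hFV.2.2
      exact hdesc d i₀ le_rfl hd'
    obtain ⟨T, hT, hiT⟩ := hsome
    refine ⟨T, hT, Int.le_induction hiT ?_⟩
    intro t ht ih
    obtain ⟨i, hi⟩ := ih
    by_contra hnol
    push_neg at hnol
    obtain ⟨j, hj⟩ : ∃ j, (z (t + 1)).1.2.1 = Sum.inr j := by
      cases hc : (z (t + 1)).1.2.1 with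
      | inl i' => exact absurd hc (hnol i')
      | inr j => exact ⟨j, rfl⟩
    have hne : G.ini (z (t + 1)) ≠ G.ter (z (t + 1)) := by
      intro he
      have h2 := he.trans (hz (t + 1))
      exact hd (t + 1) (t + 1 + 1) (by omega) (by omega) (by omega) h2
    obtain ⟨l'', hl'', hext'', hini'', hter''⟩ := betaForm z (t + 1) j hj hne
    obtain ⟨l, hlL, hextL, hinit, htert⟩ := fischer_edge_data (z t)
    rw [hi] at hextL htert
    have hkey : foll (Dyck n) (extendRay l (Sum.inl i))
        = foll (Dyck n) (extendRay l'' (Sum.inl j)) := by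
      rw [← htert, ← hini'']
      exact hz t
    obtain ⟨hij, hfoll⟩ := alpha_ter_unique hlL hl'' hkey
    apply hd t (t + 1 + 1) (by omega) (by omega) (by omega)
    rw [← hz (t + 1), hter'', ← hfoll]
    exact hinit
  -- uniqueness of α-edges into a vertex
  have alphaUniq : ∀ e e' : FischerE (Dyck n) ([] : List (Fin n ⊕ Fin n)), ∀ i i' : Fin n,
      e.1.2.1 = Sum.inl i → e'.1.2.1 = Sum.inl i' → e.1.2.2 = e'.1.2.2 → e = e' := by
    intro e e' i i' hi hi' hee
    obtain ⟨l, hlL, hextL, hini, hter⟩ := fischer_edge_data e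
    obtain ⟨l', hl'L, hext'L, hini', hter'⟩ := fischer_edge_data e'
    rw [hi] at hextL hter
    rw [hi'] at hext'L hter'
    have hkey : foll (Dyck n) (extendRay l (Sum.inl i))
        = foll (Dyck n) (extendRay l' (Sum.inl i')) := by
      rw [← hter, ← hter', hee]
    obtain ⟨hii, hfoll⟩ := alpha_ter_unique hlL hl'L hkey
    subst hii
    apply Subtype.ext
    have h1 : e.1.1 = e'.1.1 := by rw [hini, hini', hfoll]
    have h2 : e.1.2.1 = e'.1.2.1 := by rw [hi, hi']
    exact Prod.ext h1 (Prod.ext h2 hee)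
  -- choose the common threshold
  obtain ⟨Tx, hTx, hMx⟩ := allAlpha x ix hx (distinct x ix hgx)
  obtain ⟨Ty, hTy, hMy⟩ := allAlpha y iy hy (distinct y iy hgy)
  set T : ℤ := max Tx Ty with hT
  -- backward propagation of equality of edges
  have BP : ∀ d : ℕ, ∀ t : ℤ, T ≤ t → x (t + (d : ℤ)) = y (t + (d : ℤ)) → x t = y t := by
    intro d
    induction d with
    | zero =>
        intro t ht h
        simpa using h
    | succ d ih =>
        intro t ht h
        have h1 : x (t + 1) = y (t + 1) := by
          apply ih (t + 1) (by omega)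
          have hcast : (t + 1) + (d : ℤ) = t + ((d : ℕ) + 1 : ℕ) := by push_cast; ring
          rw [hcast]
          exact h
        obtain ⟨i, hi⟩ := hMx t (le_trans (le_max_left _ _) ht)
        obtain ⟨i', hi'⟩ := hMy t (le_trans (le_max_right _ _) ht)
        apply alphaUniq (x t) (y t) i i' hi hi'
        have e1 : (x t).1.2.2 = (x (t + 1)).1.1 := hx t
        have e2 : (y t).1.2.2 = (y (t + 1)).1.1 := hy t
        rw [e1, e2, h1]
  -- derive the contradiction from strict proximality
  obtain ⟨i₁, hi₁N, hi₁ne⟩ := hprox2 T.toNat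
  have hi₁T : T ≤ (i₁ : ℤ) := le_trans (Int.self_le_toNat T) (by exact_mod_cast hi₁N)
  obtain ⟨i2, hi2⟩ := hprox1 i₁
  rcases le_or_gt (i2 : ℤ) (i₁ : ℤ) with hle | hlt
  · have hmem := hi2 (i₁ - i2) (by omega)
    have hcast : (i2 : ℤ) + ((i₁ - i2 : ℕ) : ℤ) = (i₁ : ℤ) := by omega
    rw [hcast] at hmem
    exact hi₁ne hmem
  · have hxy : x ((i₁ : ℤ) + ((i2 - i₁ : ℕ) : ℤ)) = y ((i₁ : ℤ) + ((i2 - i₁ : ℕ) : ℤ)) := by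
      have h0 := hi2 0 (by omega)
      have hc1 : (i2 : ℤ) + ((0 : ℕ) : ℤ) = (i₁ : ℤ) + ((i2 - i₁ : ℕ) : ℤ) := by omega
      rw [hc1] at h0
      exact h0
    exact hi₁ne (BP (i2 - i₁) i₁ hi₁T hxy)


end Paper
end
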